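/- arXiv:1910.14427 — 5 statements merged into one kernel-verified Lean document; each statement's English description precedes it below -/
import Mathlib

section
/- Let x : [s,∞) → ℝ^n be a continuously differentiable solution of the homogeneous bilinear equation ẋ(t) = A x(t) + Σ_{k=1}^m N_k x(t) u_k(t) with x(s) = x₀. Then the matrix-valued function X(t) = x(t) x(t)^T satisfies the matrix differential inequality Ẋ(t) ≼ A X(t) + X(t) A^T + Σ_{k=1}^m N_k X(t) N_k^T + ‖u⁰(t)‖₂² X(t) for all t ≥ s, i.e., the right-hand side minus Ẋ(t) is positive semidefinite for every t ≥ s, where X(s) = x₀ x₀^T. -/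
open Matrix MeasureTheory
open scoped Classical

lemma vmv_add_left {n : ℕ} (a b c : Fin n → ℝ) :
    vecMulVec (a + b) c = vecMulVec a c + vecMulVec b c := by
  ext i j; simp [vecMulVec_apply, add_mul]

lemma vmv_smul_left {n : ℕ} (r : ℝ) (a c : Fin n → ℝ) :
    vecMulVec (r • a) c = r • vecMulVec a c := by
  ext i j; simp [vecMulVec_apply, mul_assoc]

lemma vmv_sum_left {n m : ℕ} (f : Fin m → Fin n → ℝ) (c : Fin n → ℝ) :
    vecMulVec (∑ k, f k) c = ∑ k, vecMulVec (f k) c := by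
  ext i j; simp [vecMulVec_apply, Matrix.sum_apply, Finset.sum_apply, Finset.sum_mul]

lemma vmv_add_right {n : ℕ} (a b c : Fin n → ℝ) :
    vecMulVec c (a + b) = vecMulVec c a + vecMulVec c b := by
  ext i j; simp [vecMulVec_apply, mul_add]

lemma vmv_smul_right {n : ℕ} (r : ℝ) (a c : Fin n → ℝ) :
    vecMulVec c (r • a) = r • vecMulVec c a := by
  ext i j; simp [vecMulVec_apply]; ring

lemma vmv_sum_right {n m : ℕ} (f : Fin m → Fin n → ℝ) (c : Fin n → ℝ) :
    vecMulVec c (∑ k, f k) = ∑ k, vecMulVec c (f k) := by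
  ext i j; simp [vecMulVec_apply, Matrix.sum_apply, Finset.sum_apply, Finset.mul_sum]

lemma mul_vmv {n : ℕ} (A : Matrix (Fin n) (Fin n) ℝ) (a c : Fin n → ℝ) :
    A * vecMulVec a c = vecMulVec (A.mulVec a) c := by
  ext i j
  simp [Matrix.mul_apply, vecMulVec_apply, Matrix.mulVec, dotProduct,
    Finset.sum_mul, mul_assoc]

lemma vmv_mul {n : ℕ} (A : Matrix (Fin n) (Fin n) ℝ) (a c : Fin n → ℝ) :
    vecMulVec a c * A = vecMulVec a (Aᵀ.mulVec c) := by
  ext i j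
  simp only [Matrix.mul_apply, vecMulVec_apply, Matrix.mulVec, dotProduct,
    Matrix.transpose_apply, Finset.mul_sum]
  refine Finset.sum_congr rfl fun l _ => by ring

lemma vmv_self_posSemidef {n : ℕ} (v : Fin n → ℝ) : (vecMulVec v v).PosSemidef := by
  rw [vecMulVec_eq (Fin 1)]
  have h : Matrix.replicateCol (Fin 1) v = (Matrix.replicateRow (Fin 1) v)ᴴ := by
    rw [Matrix.conjTranspose_replicateRow]; simp
  rw [h]
  exact Matrix.posSemidef_conjTranspose_mul_self _

lemma psd_sum {n m : ℕ} (f : Fin m → Matrix (Fin n) (Fin n) ℝ)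
    (hf : ∀ k, (f k).PosSemidef) : (∑ k, f k).PosSemidef := by
  classical
  refine Finset.sum_induction f Matrix.PosSemidef ?_ ?_ fun k _ => hf k
  · intro a b ha hb
    exact ha.add hb
  · exact Matrix.PosSemidef.zero

/-- **Lemma 1.** If `x` solves the homogeneous bilinear equation on `[s,∞)`,
then `X(t) = x(t) x(t)ᵀ` satisfies the matrix differential inequality
`Ẋ(t) ≼ A X(t) + X(t) Aᵀ + Σ_k N_k X(t) N_kᵀ + ‖u⁰(t)‖₂² X(t)`, with `X(s) = x₀ x₀ᵀ`. -/
theorem lemma1_matrix_differential_inequality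
    {n m : ℕ}
    (A : Matrix (Fin n) (Fin n) ℝ) (N : Fin m → Matrix (Fin n) (Fin n) ℝ)
    (s : ℝ) (u : ℝ → Fin m → ℝ) (hu : Continuous u)
    -- u⁰ : components of u with nonzero N_k
    (u0 : ℝ → Fin m → ℝ) (hu0 : ∀ t k, u0 t k = if N k = 0 then 0 else u t k)
    -- x solves the homogeneous bilinear equation on [s,∞) with x(s) = x₀
    (x : ℝ → Fin n → ℝ) (x0 : Fin n → ℝ) (hxs : x s = x0)
    (hx : ∀ t ∈ Set.Ici s, ∀ i, HasDerivAt (fun τ => x τ i)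
      ((A.mulVec (x t) + ∑ k, u t k • (N k).mulVec (x t)) i) t)
    -- X(t) = x(t) x(t)ᵀ and X' is its (entrywise) derivative
    (X X' : ℝ → Matrix (Fin n) (Fin n) ℝ)
    (hX : ∀ t, X t = vecMulVec (x t) (x t))
    (hX' : ∀ t ∈ Set.Ici s, ∀ i j, HasDerivAt (fun τ => X τ i j) (X' t i j) t) :
    X s = vecMulVec x0 x0 ∧
      ∀ t ∈ Set.Ici s,
        (A * X t + X t * Aᵀ + (∑ k, N k * X t * (N k)ᵀ) + (∑ k, (u0 t k) ^ 2) • X t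
          - X' t).PosSemidef := by
  refine ⟨by rw [hX, hxs], fun t ht => ?_⟩
  set xt := x t with hxt
  set xd := A.mulVec xt + ∑ k, u t k • (N k).mulVec xt with hxd
  set p : Fin m → Fin n → ℝ := fun k => (N k).mulVec xt with hp
  set v : Fin m → Fin n → ℝ := fun k => p k - u0 t k • xt with hv
  -- derivative of X identified
  have hX'eq : X' t = vecMulVec xd xt + vecMulVec xt xd := by
    ext i j
    have h1 := hX' t ht i j
    have h2 : HasDerivAt (fun τ => X τ i j) (xd i * xt j + xt i * xd j) t := by
      have := (hx t ht i).mul (hx t ht j)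
      simpa only [hX, vecMulVec_apply, Pi.mul_def] using this
    have := h1.unique h2
    simp [this, vecMulVec_apply, Matrix.add_apply, Pi.add_apply]
  -- per-component identity
  have key : ∀ k, vecMulVec (p k) (p k) - u t k • vecMulVec (p k) xt
      - u t k • vecMulVec xt (p k) + (u0 t k) ^ 2 • vecMulVec xt xt
      = vecMulVec (v k) (v k) := by
    intro k
    by_cases h : N k = 0
    · have hp0 : p k = 0 := by simp [hp, h]
      have hu00 : u0 t k = 0 := by rw [hu0]; simp [h]
      ext i j
      simp [hp0, hu00, hv, vecMulVec_apply]
    · have hu0u : u0 t k = u t k := by rw [hu0]; simp [h]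
      ext i j
      simp only [hv, hu0u, vecMulVec_apply, Matrix.add_apply, Matrix.sub_apply,
        Matrix.smul_apply, Pi.sub_apply, Pi.smul_apply, smul_eq_mul]
      ring
  -- main matrix identity
  have hMain : A * X t + X t * Aᵀ + (∑ k, N k * X t * (N k)ᵀ) + (∑ k, (u0 t k) ^ 2) • X t
      - X' t = ∑ k, vecMulVec (v k) (v k) := by
    rw [← Finset.sum_congr rfl fun k _ => key k]
    rw [hX, hX'eq]
    have h1 : A * vecMulVec xt xt = vecMulVec (A.mulVec xt) xt := mul_vmv _ _ _
    have h2 : vecMulVec xt xt * Aᵀ = vecMulVec xt (A.mulVec xt) := by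
      rw [vmv_mul, Matrix.transpose_transpose]
    have h3 : ∀ k, N k * vecMulVec xt xt * (N k)ᵀ = vecMulVec (p k) (p k) := by
      intro k
      rw [mul_vmv, vmv_mul, Matrix.transpose_transpose]
    have h4 : vecMulVec xd xt
        = vecMulVec (A.mulVec xt) xt + ∑ k, u t k • vecMulVec (p k) xt := by
      rw [hxd, vmv_add_left, vmv_sum_left]
      congr 1
      exact Finset.sum_congr rfl fun k _ => vmv_smul_left _ _ _
    have h5 : vecMulVec xt xd
        = vecMulVec xt (A.mulVec xt) + ∑ k, u t k • vecMulVec xt (p k) := by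
      rw [hxd, vmv_add_right, vmv_sum_right]
      congr 1
      exact Finset.sum_congr rfl fun k _ => vmv_smul_right _ _ _
    rw [Finset.sum_congr rfl fun k _ => h3 k, h1, h2, h4, h5, Finset.sum_smul]
    simp only [Finset.sum_sub_distrib, Finset.sum_add_distrib]
    abel
  rw [hMain]
  exact psd_sum _ fun k => vmv_self_posSemidef (v k)
end

section
/- (Gronwall lemma for matrix differential equations) Let X(t), t ≥ s ≥ 0, be a continuously differentiable symmetric-matrix-valued function satisfying the matrix differential inequality Ẋ(t) ≼ A X(t) + X(t) A^T + Σ_{k=1}^m N_k X(t) N_k^T + ‖u⁰(t)‖₂² X(t) for all t ≥ s, and let Z(t), t ≥ s, be the solution of the matrix differential equation Ż(t) = A Z(t) + Z(t) A^T + Σ_{k=1}^m N_k Z(t) N_k^T + ‖u⁰(t)‖₂² Z(t). If X(s) ≼ Z(s), then X(t) ≼ Z(t) for all t ≥ s. -/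
open Matrix MeasureTheory
open scoped Classical

namespace MGL

open Set Filter
open scoped Topology


variable {n : ℕ}

noncomputable def frobSq (M : Matrix (Fin n) (Fin n) ℝ) : ℝ := ∑ i, ∑ j, (M i j) ^ 2

lemma frobSq_nonneg (M : Matrix (Fin n) (Fin n) ℝ) : 0 ≤ frobSq M :=
  Finset.sum_nonneg fun _ _ => Finset.sum_nonneg fun _ _ => sq_nonneg _

lemma dot_self_nonneg (v : Fin n → ℝ) : 0 ≤ v ⬝ᵥ v :=
  Finset.sum_nonneg fun i _ => mul_self_nonneg _

lemma mulVec_dot_mulVec_le (M : Matrix (Fin n) (Fin n) ℝ) (v : Fin n → ℝ) :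
    (M *ᵥ v) ⬝ᵥ (M *ᵥ v) ≤ frobSq M * (v ⬝ᵥ v) := by
  simp only [dotProduct, mulVec, frobSq]
  rw [Finset.sum_mul]
  refine Finset.sum_le_sum fun i _ => ?_
  have h := Finset.sum_mul_sq_le_sq_mul_sq Finset.univ (fun j => M i j) (fun j => v j)
  calc (∑ j, M i j * v j) * (∑ j, M i j * v j) = (∑ j, M i j * v j) ^ 2 := by ring
    _ ≤ (∑ j, M i j ^ 2) * ∑ j, v j ^ 2 := h
    _ = (∑ j, M i j ^ 2) * ∑ j, v j * v j := by
        congr 1; exact Finset.sum_congr rfl fun j _ => by ring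

lemma two_mul_dot_mulVec_ge (M : Matrix (Fin n) (Fin n) ℝ) (v : Fin n → ℝ) :
    -(v ⬝ᵥ v + (M *ᵥ v) ⬝ᵥ (M *ᵥ v)) ≤ 2 * (v ⬝ᵥ (M *ᵥ v)) := by
  have h := dot_self_nonneg (v + M *ᵥ v)
  have h2 : (v + M *ᵥ v) ⬝ᵥ (v + M *ᵥ v)
      = v ⬝ᵥ v + 2 * (v ⬝ᵥ (M *ᵥ v)) + (M *ᵥ v) ⬝ᵥ (M *ᵥ v) := by
    simp [add_dotProduct, dotProduct_add, dotProduct_comm (M *ᵥ v) v]; ring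
  linarith [h2 ▸ h]

lemma two_mul_dot_mulVec_le (M : Matrix (Fin n) (Fin n) ℝ) (v : Fin n → ℝ) :
    2 * (v ⬝ᵥ (M *ᵥ v)) ≤ v ⬝ᵥ v + (M *ᵥ v) ⬝ᵥ (M *ᵥ v) := by
  have h := dot_self_nonneg (v - M *ᵥ v)
  have h2 : (v - M *ᵥ v) ⬝ᵥ (v - M *ᵥ v)
      = v ⬝ᵥ v - 2 * (v ⬝ᵥ (M *ᵥ v)) + (M *ᵥ v) ⬝ᵥ (M *ᵥ v) := by
    simp [sub_dotProduct, dotProduct_sub, dotProduct_comm (M *ᵥ v) v]; ring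
  linarith [h2 ▸ h]

lemma dot_mulVec_symm {M : Matrix (Fin n) (Fin n) ℝ} (hsym : Mᵀ = M) (a b : Fin n → ℝ) :
    a ⬝ᵥ (M *ᵥ b) = b ⬝ᵥ (M *ᵥ a) := by
  rw [dotProduct_mulVec, ← mulVec_transpose, hsym, dotProduct_comm]

lemma mulVec_eq_zero_of_dot {M : Matrix (Fin n) (Fin n) ℝ} (hsym : Mᵀ = M)
    (hpsd : ∀ x, 0 ≤ x ⬝ᵥ (M *ᵥ x)) {v : Fin n → ℝ} (hv : v ⬝ᵥ (M *ᵥ v) = 0) :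
    M *ᵥ v = 0 := by
  have key : ∀ x : Fin n → ℝ, x ⬝ᵥ (M *ᵥ v) = 0 := by
    intro x
    have hq : ∀ τ : ℝ, 0 ≤ (x ⬝ᵥ (M *ᵥ x)) * (τ * τ) + (2 * (x ⬝ᵥ (M *ᵥ v))) * τ + 0 := by
      intro τ
      have h0 := hpsd (v + τ • x)
      have hexp : (v + τ • x) ⬝ᵥ (M *ᵥ (v + τ • x))
          = v ⬝ᵥ (M *ᵥ v) + τ * (x ⬝ᵥ (M *ᵥ v)) + τ * (v ⬝ᵥ (M *ᵥ x)) + τ^2 * (x ⬝ᵥ (M *ᵥ x)) := by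
        simp [mulVec_add, dotProduct_add, add_dotProduct, mulVec_smul, dotProduct_smul,
          smul_dotProduct, smul_eq_mul]
        ring
      rw [hexp, hv, dot_mulVec_symm hsym v x] at h0
      nlinarith [h0]
    have hd := discrim_le_zero (K := ℝ) hq
    have h2 : (2 * (x ⬝ᵥ (M *ᵥ v))) ^ 2 ≤ 0 := by
      unfold discrim at hd; nlinarith [hd]
    nlinarith [sq_nonneg (x ⬝ᵥ (M *ᵥ v)), h2]
  funext i
  have := key (Pi.single i 1)
  simpa [dotProduct, Pi.single_apply] using this

lemma hasDerivAt_quadForm {M : ℝ → Matrix (Fin n) (Fin n) ℝ} {M' : Matrix (Fin n) (Fin n) ℝ}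
    {t : ℝ} (h : ∀ i j, HasDerivAt (fun τ => M τ i j) (M' i j) t) (v : Fin n → ℝ) :
    HasDerivAt (fun τ => v ⬝ᵥ (M τ *ᵥ v)) (v ⬝ᵥ (M' *ᵥ v)) t := by
  simp only [dotProduct, mulVec]
  exact HasDerivAt.fun_sum fun i _ =>
    ((HasDerivAt.fun_sum fun j _ => (h i j).mul_const (v j)).const_mul (v i))

lemma deriv_nonpos_of_nonneg_left {g : ℝ → ℝ} {g' a b : ℝ} (hab : a < b)
    (hd : HasDerivAt g g' b) (h0 : ∀ t ∈ Set.Ico a b, 0 ≤ g t) (hb : g b = 0) : g' ≤ 0 := by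
  have hslope := hasDerivAt_iff_tendsto_slope.1 hd
  have h1 : Tendsto (slope g b) (𝓝[<] b) (𝓝 g') :=
    hslope.mono_left (nhdsWithin_mono _ fun x hx => ne_of_lt hx)
  refine le_of_tendsto h1 ?_
  filter_upwards [Ioo_mem_nhdsLT_of_mem (Set.mem_Ioc.2 ⟨hab, le_refl b⟩)] with t ht
  rw [slope_def_field, hb, sub_zero]
  exact div_nonpos_of_nonneg_of_nonpos (h0 t ⟨le_of_lt ht.1, ht.2⟩) (by linarith [ht.2])

lemma sum_mulVec {ι : Type*} [Fintype ι] (M : ι → Matrix (Fin n) (Fin n) ℝ) (v : Fin n → ℝ) :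
    (∑ k, M k) *ᵥ v = ∑ k, M k *ᵥ v := by
  funext i
  simp only [mulVec, dotProduct, Matrix.sum_apply, Finset.sum_apply, Finset.sum_mul]
  exact Finset.sum_comm

lemma dot_sum {ι : Type*} [Fintype ι] (v : Fin n → ℝ) (w : ι → Fin n → ℝ) :
    v ⬝ᵥ (∑ k, w k) = ∑ k, v ⬝ᵥ w k := by
  simp only [dotProduct, Finset.sum_apply, Finset.mul_sum]
  exact Finset.sum_comm

lemma exists_unit_of_dot_nonpos {M : Matrix (Fin n) (Fin n) ℝ} {y : Fin n → ℝ}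
    (hy : y ≠ 0) (h : y ⬝ᵥ (M *ᵥ y) ≤ 0) :
    ∃ z, z ⬝ᵥ z = 1 ∧ z ⬝ᵥ (M *ᵥ z) ≤ 0 := by
  have hr0 : 0 < y ⬝ᵥ y :=
    lt_of_le_of_ne (dot_self_nonneg y) (fun h' => hy (dotProduct_self_eq_zero.1 h'.symm))
  set a : ℝ := (Real.sqrt (y ⬝ᵥ y))⁻¹ with ha
  have hsq : Real.sqrt (y ⬝ᵥ y) * Real.sqrt (y ⬝ᵥ y) = y ⬝ᵥ y := Real.mul_self_sqrt hr0.le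
  have hs0 : 0 < Real.sqrt (y ⬝ᵥ y) := Real.sqrt_pos.2 hr0
  refine ⟨a • y, ?_, ?_⟩
  · simp only [smul_dotProduct, dotProduct_smul, smul_eq_mul, ha]
    field_simp
    rw [Real.sq_sqrt hr0.le]
  · have expand : (a • y) ⬝ᵥ (M *ᵥ (a • y)) = a * (a * (y ⬝ᵥ (M *ᵥ y))) := by
      simp [smul_dotProduct, dotProduct_smul, mulVec_smul, smul_eq_mul]
    rw [expand]
    have ha0 : 0 < a := inv_pos.2 hs0
    nlinarith [mul_nonpos_of_nonneg_of_nonpos (mul_nonneg ha0.le ha0.le) h]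

lemma posdef_perturbed {mm : ℕ} (A : Matrix (Fin n) (Fin n) ℝ)
    (N : Fin mm → Matrix (Fin n) (Fin n) ℝ) (s T : ℝ) (hsT : s ≤ T)
    (c : ℝ → ℝ) (hc0 : ∀ t, 0 ≤ c t) (C : ℝ) (hcC : ∀ t ∈ Set.Icc s T, c t ≤ C)
    (K : ℝ) (hK : K = (1 + frobSq A) + (∑ k, frobSq ((N k)ᵀ)) + C + 1)
    (X X' Z W : ℝ → Matrix (Fin n) (Fin n) ℝ) (φ : ℝ → ℝ)
    (hφpos : ∀ t, 0 < φ t) (hφd : ∀ t, HasDerivAt φ (K * φ t) t)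
    (hXsymm : ∀ t ∈ Set.Ici s, (X t)ᵀ = X t)
    (hZsymm : ∀ t ∈ Set.Ici s, (Z t)ᵀ = Z t)
    (hX' : ∀ t ∈ Set.Ici s, ∀ i j, HasDerivAt (fun τ => X τ i j) (X' t i j) t)
    (hXineq : ∀ t ∈ Set.Ici s, ∀ y : Fin n → ℝ,
      0 ≤ y ⬝ᵥ ((A * X t + X t * Aᵀ + (∑ k, N k * X t * (N k)ᵀ) + c t • X t - X' t) *ᵥ y))
    (hZ : ∀ t ∈ Set.Ici s, ∀ i j, HasDerivAt (fun τ => Z τ i j)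
      ((A * Z t + Z t * Aᵀ + (∑ k, N k * Z t * (N k)ᵀ) + c t • Z t) i j) t)
    (hW : ∀ t, W t = Z t - X t + φ t • 1)
    (hinitpos : ∀ y : Fin n → ℝ, 0 ≤ y ⬝ᵥ ((Z s - X s) *ᵥ y)) :
    ∀ t ∈ Set.Icc s T, ∀ y : Fin n → ℝ, y ≠ 0 → 0 < y ⬝ᵥ (W t *ᵥ y) := by
  subst hK
  set K : ℝ := (1 + frobSq A) + (∑ k, frobSq ((N k)ᵀ)) + C + 1 with hKdef
  -- entrywise derivative of W
  have hWd : ∀ t ∈ Set.Ici s, ∀ i j, HasDerivAt (fun τ => W τ i j)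
      (((A * Z t + Z t * Aᵀ + (∑ k, N k * Z t * (N k)ᵀ) + c t • Z t) - X' t
        + (K * φ t) • 1) i j) t := by
    intro t ht i j
    have h1 := (hZ t ht i j).sub (hX' t ht i j)
    have h2 := (hφd t).mul_const ((1 : Matrix (Fin n) (Fin n) ℝ) i j)
    have h3 := h1.add h2
    simp only [Matrix.add_apply, Matrix.sub_apply, Matrix.smul_apply, smul_eq_mul] at h3
    simp only [hW, Matrix.add_apply, Matrix.sub_apply, Matrix.smul_apply, smul_eq_mul]
    exact h3
  by_contra hcon
  push_neg at hcon
  obtain ⟨t₁, ht₁, y₁, hy₁0, hy₁⟩ := hcon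
  obtain ⟨z₁, hz₁1, hz₁⟩ := exists_unit_of_dot_nonpos hy₁0 hy₁
  set Sph : Set (Fin n → ℝ) := {y | y ⬝ᵥ y = 1} with hSph
  set S : Set ℝ := {t | t ∈ Set.Icc s T ∧ ∃ y ∈ Sph, y ⬝ᵥ (W t *ᵥ y) ≤ 0} with hSdef
  have hSne : S.Nonempty := ⟨t₁, ht₁, z₁, hz₁1, hz₁⟩
  have hdotcont : Continuous (fun y : Fin n → ℝ => y ⬝ᵥ y) := by
    show Continuous fun y : Fin n → ℝ => ∑ i, y i * y i
    exact continuous_finset_sum _ fun i _ => (continuous_apply i).mul (continuous_apply i)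
  have hSphClosed : IsClosed Sph := isClosed_eq hdotcont continuous_const
  have hSphSub : Sph ⊆ Metric.closedBall 0 1 := by
    intro y hy
    rw [Metric.mem_closedBall, dist_zero_right]
    rw [pi_norm_le_iff_of_nonneg zero_le_one]
    intro i
    rw [Real.norm_eq_abs, abs_le_one_iff_mul_self_le_one]
    calc y i * y i ≤ ∑ j, y j * y j :=
          Finset.single_le_sum (f := fun j => y j * y j)
            (fun j _ => mul_self_nonneg _) (Finset.mem_univ i)
      _ = 1 := hy
  have hSphCompact : IsCompact Sph :=
    (isCompact_closedBall (0 : Fin n → ℝ) 1).of_isClosed_subset hSphClosed hSphSub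
  have hWentryCont : ∀ (i j : Fin n), ContinuousOn (fun t => W t i j) (Set.Icc s T) :=
    fun i j t ht => ((hWd t ht.1 i j).continuousAt).continuousWithinAt
  have hΦcont : ContinuousOn (fun p : ℝ × (Fin n → ℝ) => p.2 ⬝ᵥ (W p.1 *ᵥ p.2))
      (Set.Icc s T ×ˢ Sph) := by
    show ContinuousOn (fun p : ℝ × (Fin n → ℝ) => ∑ i, p.2 i * ∑ j, W p.1 i j * p.2 j) _
    refine continuousOn_finset_sum _ fun i _ => ?_
    refine ContinuousOn.mul (((continuous_apply i).comp continuous_snd).continuousOn) ?_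
    refine continuousOn_finset_sum _ fun j _ => ?_
    refine ContinuousOn.mul ?_ (((continuous_apply j).comp continuous_snd).continuousOn)
    exact (hWentryCont i j).comp continuous_fst.continuousOn fun p hp => hp.1
  have hKsetCompact : IsCompact ((Set.Icc s T ×ˢ Sph)
      ∩ (fun p : ℝ × (Fin n → ℝ) => p.2 ⬝ᵥ (W p.1 *ᵥ p.2)) ⁻¹' Set.Iic 0) := by
    refine (isCompact_Icc.prod hSphCompact).of_isClosed_subset ?_ Set.inter_subset_left
    exact hΦcont.preimage_isClosed_of_isClosed (isClosed_Icc.prod hSphClosed) isClosed_Iic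
  have hSeq : S = Prod.fst '' ((Set.Icc s T ×ˢ Sph)
      ∩ (fun p : ℝ × (Fin n → ℝ) => p.2 ⬝ᵥ (W p.1 *ᵥ p.2)) ⁻¹' Set.Iic 0) := by
    ext t
    constructor
    · rintro ⟨htIcc, y, hy1, hyW⟩
      exact ⟨(t, y), ⟨⟨htIcc, hy1⟩, hyW⟩, rfl⟩
    · rintro ⟨⟨t', y⟩, ⟨⟨htIcc, hy1⟩, hyW⟩, rfl⟩
      exact ⟨htIcc, y, hy1, hyW⟩
  have hScompact : IsCompact S := hSeq ▸ hKsetCompact.image continuous_fst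
  have ht₂S : sInf S ∈ S := hScompact.sInf_mem hSne
  set t₂ := sInf S with ht₂def
  obtain ⟨ht₂Icc, v, hv1, hvW⟩ := ht₂S
  have hbdd : BddBelow S := hScompact.bddBelow
  have hbefore : ∀ t ∈ Set.Ico s t₂, ∀ y : Fin n → ℝ, 0 ≤ y ⬝ᵥ (W t *ᵥ y) := by
    intro t ht y
    by_contra hneg
    push_neg at hneg
    have hy0 : y ≠ 0 := by
      rintro rfl
      simp at hneg
    obtain ⟨z, hz1, hz⟩ := exists_unit_of_dot_nonpos hy0 hneg.le
    have htS : t ∈ S := ⟨⟨ht.1, le_trans ht.2.le ht₂Icc.2⟩, z, hz1, hz⟩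
    have := csInf_le hbdd htS
    rw [← ht₂def] at this
    linarith [ht.2]
  have hWsplit : ∀ t (y : Fin n → ℝ), y ⬝ᵥ (W t *ᵥ y)
      = y ⬝ᵥ ((Z t - X t) *ᵥ y) + φ t * (y ⬝ᵥ y) := by
    intro t y
    rw [hW t, add_mulVec, smul_mulVec, one_mulVec, dotProduct_add, dotProduct_smul,
      smul_eq_mul]
  have hWspos : ∀ y : Fin n → ℝ, y ≠ 0 → 0 < y ⬝ᵥ (W s *ᵥ y) := by
    intro y hy
    rw [hWsplit]
    have h1 := hinitpos y
    have h2 : 0 < y ⬝ᵥ y :=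
      lt_of_le_of_ne (dot_self_nonneg y) fun h' => hy (dotProduct_self_eq_zero.1 h'.symm)
    nlinarith [hφpos s]
  have ht₂psd : ∀ y : Fin n → ℝ, 0 ≤ y ⬝ᵥ (W t₂ *ᵥ y) := by
    intro y
    rcases eq_or_lt_of_le ht₂Icc.1 with heq | hlt
    · rcases eq_or_ne y 0 with rfl | hy
      · simp
      · exact (heq ▸ hWspos y hy).le
    · have hcg : ContinuousAt (fun t => y ⬝ᵥ (W t *ᵥ y)) t₂ :=
        (hasDerivAt_quadForm (fun i j => hWd t₂ ht₂Icc.1 i j) y).continuousAt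
      have htd : Tendsto (fun t => y ⬝ᵥ (W t *ᵥ y)) (𝓝[<] t₂) (𝓝 (y ⬝ᵥ (W t₂ *ᵥ y))) :=
        hcg.continuousWithinAt.tendsto
      refine ge_of_tendsto htd ?_
      filter_upwards [Ioo_mem_nhdsLT_of_mem (Set.mem_Ioc.2 ⟨hlt, le_refl t₂⟩)] with τ hτ
      exact hbefore τ ⟨hτ.1.le, hτ.2⟩ y
  have hv1' : v ⬝ᵥ v = 1 := hv1
  have hv0 : v ≠ 0 := by
    rintro rfl
    rw [zero_dotProduct] at hv1'
    exact zero_ne_one hv1'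
  have hgz : v ⬝ᵥ (W t₂ *ᵥ v) = 0 := le_antisymm hvW (ht₂psd v)
  have hslt : s < t₂ := by
    rcases eq_or_lt_of_le ht₂Icc.1 with heq | hlt
    · exact absurd hvW (not_le.2 (heq ▸ hWspos v hv0))
    · exact hlt
  have hYsym : ∀ t ∈ Set.Ici s, (Z t - X t)ᵀ = Z t - X t := by
    intro t ht
    rw [transpose_sub, hZsymm t ht, hXsymm t ht]
  have hWsym : (W t₂)ᵀ = W t₂ := by
    rw [hW, transpose_add, transpose_smul, transpose_one, hYsym t₂ ht₂Icc.1]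
  have hWv : W t₂ *ᵥ v = 0 := mulVec_eq_zero_of_dot hWsym ht₂psd hgz
  have hYv : (Z t₂ - X t₂) *ᵥ v = -(φ t₂) • v := by
    have h0 := hWv
    rw [hW, add_mulVec, smul_mulVec, one_mulVec] at h0
    have h1 := eq_neg_of_add_eq_zero_left h0
    rw [h1, neg_smul]
  have hg'le : v ⬝ᵥ (((A * Z t₂ + Z t₂ * Aᵀ + (∑ k, N k * Z t₂ * (N k)ᵀ) + c t₂ • Z t₂)
      - X' t₂ + (K * φ t₂) • 1) *ᵥ v) ≤ 0 :=
    deriv_nonpos_of_nonneg_left hslt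
      (hasDerivAt_quadForm (fun i j => hWd t₂ ht₂Icc.1 i j) v)
      (fun t ht => hbefore t ht v) hgz
  have hZY : Z t₂ = (Z t₂ - X t₂) + X t₂ := (sub_add_cancel _ _).symm
  have hW'eq : (A * Z t₂ + Z t₂ * Aᵀ + (∑ k, N k * Z t₂ * (N k)ᵀ) + c t₂ • Z t₂) - X' t₂
      + (K * φ t₂) • 1
      = A * (Z t₂ - X t₂) + (Z t₂ - X t₂) * Aᵀ + (∑ k, N k * (Z t₂ - X t₂) * (N k)ᵀ)
        + c t₂ • (Z t₂ - X t₂)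
        + (A * X t₂ + X t₂ * Aᵀ + (∑ k, N k * X t₂ * (N k)ᵀ) + c t₂ • X t₂ - X' t₂)
        + (K * φ t₂) • 1 := by
    rw [hZY]
    simp only [Matrix.mul_add, Matrix.add_mul, smul_add, Finset.sum_add_distrib]
    abel
  rw [hW'eq] at hg'le
  simp only [add_mulVec, dotProduct_add] at hg'le
  have hT1 : v ⬝ᵥ ((A * (Z t₂ - X t₂)) *ᵥ v) = -(φ t₂) * (v ⬝ᵥ (A *ᵥ v)) := by
    rw [← mulVec_mulVec, hYv, mulVec_smul, dotProduct_smul, smul_eq_mul]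
  have hT2 : v ⬝ᵥ (((Z t₂ - X t₂) * Aᵀ) *ᵥ v) = -(φ t₂) * (v ⬝ᵥ (A *ᵥ v)) := by
    rw [← mulVec_mulVec, dot_mulVec_symm (hYsym t₂ ht₂Icc.1), hYv, dotProduct_smul,
      smul_eq_mul, mulVec_transpose, ← dotProduct_mulVec]
  have hT3 : ∀ k, -(φ t₂) * frobSq ((N k)ᵀ)
      ≤ v ⬝ᵥ ((N k * (Z t₂ - X t₂) * (N k)ᵀ) *ᵥ v) := by
    intro k
    have hw : (N k * (Z t₂ - X t₂) * (N k)ᵀ) *ᵥ v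
        = N k *ᵥ ((Z t₂ - X t₂) *ᵥ ((N k)ᵀ *ᵥ v)) := by
      rw [mulVec_mulVec, mulVec_mulVec, Matrix.mul_assoc]
    have hq : v ⬝ᵥ (N k *ᵥ ((Z t₂ - X t₂) *ᵥ ((N k)ᵀ *ᵥ v)))
        = ((N k)ᵀ *ᵥ v) ⬝ᵥ ((Z t₂ - X t₂) *ᵥ ((N k)ᵀ *ᵥ v)) := by
      rw [dotProduct_mulVec, ← mulVec_transpose]
    have hWw := ht₂psd ((N k)ᵀ *ᵥ v)
    rw [hWsplit t₂ ((N k)ᵀ *ᵥ v)] at hWw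
    have hww : ((N k)ᵀ *ᵥ v) ⬝ᵥ ((N k)ᵀ *ᵥ v) ≤ frobSq ((N k)ᵀ) := by
      have h := mulVec_dot_mulVec_le ((N k)ᵀ) v
      rwa [hv1', mul_one] at h
    have hmul := mul_le_mul_of_nonneg_left hww (hφpos t₂).le
    rw [hw, hq]
    linarith [hWw, hmul]
  have hT3sum : -(φ t₂) * (∑ k, frobSq ((N k)ᵀ))
      ≤ v ⬝ᵥ ((∑ k, N k * (Z t₂ - X t₂) * (N k)ᵀ) *ᵥ v) := by
    rw [sum_mulVec, dot_sum, Finset.mul_sum]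
    exact Finset.sum_le_sum fun k _ => hT3 k
  have hT4 : v ⬝ᵥ ((c t₂ • (Z t₂ - X t₂)) *ᵥ v) = c t₂ * (-(φ t₂)) := by
    rw [smul_mulVec, hYv, dotProduct_smul, dotProduct_smul, smul_eq_mul, smul_eq_mul,
      hv1']
    ring
  have hT5 : 0 ≤ v ⬝ᵥ ((A * X t₂ + X t₂ * Aᵀ + (∑ k, N k * X t₂ * (N k)ᵀ) + c t₂ • X t₂
      - X' t₂) *ᵥ v) := hXineq t₂ ht₂Icc.1 v
  have hT6 : v ⬝ᵥ (((K * φ t₂) • (1 : Matrix (Fin n) (Fin n) ℝ)) *ᵥ v) = K * φ t₂ := by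
    rw [smul_mulVec, one_mulVec, dotProduct_smul, smul_eq_mul, hv1', mul_one]
  rw [hT1, hT2, hT4, hT6] at hg'le
  have hAv : (A *ᵥ v) ⬝ᵥ (A *ᵥ v) ≤ frobSq A := by
    have h := mulVec_dot_mulVec_le A v
    rwa [hv1', mul_one] at h
  have h2a : 2 * (v ⬝ᵥ (A *ᵥ v)) ≤ 1 + frobSq A := by
    have h1 := two_mul_dot_mulVec_le A v
    linarith [h1, hAv, hv1'.le, hv1'.ge]
  have hφ := hφpos t₂
  have hc2 := hcC t₂ ht₂Icc
  have hc3 := hc0 t₂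
  rw [hKdef] at hg'le
  nlinarith [hg'le, hT3sum, hT5, hφ,
    mul_le_mul_of_nonneg_left h2a hφ.le,
    mul_le_mul_of_nonneg_left hc2 hφ.le]




noncomputable def absSum (M : Matrix (Fin n) (Fin n) ℝ) : ℝ := ∑ i, ∑ j, |M i j|

lemma absSum_nonneg (M : Matrix (Fin n) (Fin n) ℝ) : 0 ≤ absSum M :=
  Finset.sum_nonneg fun _ _ => Finset.sum_nonneg fun _ _ => abs_nonneg _

lemma entry_abs_le_mul_left (M Q : Matrix (Fin n) (Fin n) ℝ) {b : ℝ} (hb : 0 ≤ b)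
    (hQ : ∀ k l, |Q k l| ≤ b) (i j : Fin n) : |(M * Q) i j| ≤ absSum M * b := by
  rw [Matrix.mul_apply]
  calc |∑ k, M i k * Q k j| ≤ ∑ k, |M i k * Q k j| := Finset.abs_sum_le_sum_abs _ _
    _ ≤ ∑ k, |M i k| * b := Finset.sum_le_sum fun k _ => by
        rw [abs_mul]; exact mul_le_mul_of_nonneg_left (hQ k j) (abs_nonneg _)
    _ = (∑ k, |M i k|) * b := by rw [Finset.sum_mul]
    _ ≤ absSum M * b := by
        refine mul_le_mul_of_nonneg_right ?_ hb
        exact Finset.single_le_sum (f := fun i => ∑ k, |M i k|)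
          (fun i _ => Finset.sum_nonneg fun _ _ => abs_nonneg _) (Finset.mem_univ i)

lemma entry_abs_le_mul_right (Q B : Matrix (Fin n) (Fin n) ℝ) {b : ℝ} (hb : 0 ≤ b)
    (hQ : ∀ k l, |Q k l| ≤ b) (i j : Fin n) : |(Q * B) i j| ≤ absSum B * b := by
  rw [Matrix.mul_apply]
  calc |∑ k, Q i k * B k j| ≤ ∑ k, |Q i k * B k j| := Finset.abs_sum_le_sum_abs _ _
    _ ≤ ∑ k, b * |B k j| := Finset.sum_le_sum fun k _ => by
        rw [abs_mul]; exact mul_le_mul_of_nonneg_right (hQ i k) (abs_nonneg _)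
    _ = b * ∑ k, |B k j| := by rw [Finset.mul_sum]
    _ ≤ b * absSum B := by
        refine mul_le_mul_of_nonneg_left ?_ hb
        refine Finset.sum_le_sum fun k _ => ?_
        exact Finset.single_le_sum (f := fun l => |B k l|)
          (fun _ _ => abs_nonneg _) (Finset.mem_univ j)
    _ = absSum B * b := mul_comm _ _

lemma Z_symm {m : ℕ} (A : Matrix (Fin n) (Fin n) ℝ) (N : Fin m → Matrix (Fin n) (Fin n) ℝ)
    (s : ℝ) (c : ℝ → ℝ) (hc : Continuous c)
    (Z : ℝ → Matrix (Fin n) (Fin n) ℝ)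
    (hZ : ∀ t ∈ Set.Ici s, ∀ i j, HasDerivAt (fun τ => Z τ i j)
      ((A * Z t + Z t * Aᵀ + (∑ k, N k * Z t * (N k)ᵀ) + c t • Z t) i j) t)
    (hZs : (Z s)ᵀ = Z s) :
    ∀ t ∈ Set.Ici s, (Z t)ᵀ = Z t := by
  intro t₀ ht₀
  set F : ℝ → Matrix (Fin n) (Fin n) ℝ :=
    fun t => A * Z t + Z t * Aᵀ + (∑ k, N k * Z t * (N k)ᵀ) + c t • Z t with hF
  set P : ℝ → Fin n → Fin n → ℝ := fun t i j => Z t i j - Z t j i with hPdef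
  set P' : ℝ → Fin n → Fin n → ℝ := fun t i j => F t i j - F t j i with hP'def
  have hP : ∀ t ∈ Set.Ici s, HasDerivAt P (P' t) t := by
    intro t ht
    rw [hasDerivAt_pi]; intro i
    rw [hasDerivAt_pi]; intro j
    exact (hZ t ht i j).sub (hZ t ht j i)
  obtain ⟨C, hC⟩ := (isCompact_Icc (a := s) (b := t₀)).exists_bound_of_continuousOn
    (hc.continuousOn (s := Set.Icc s t₀))
  have hC0 : 0 ≤ C := le_trans (norm_nonneg _) (hC s (Set.left_mem_Icc.2 ht₀))
  set K₁ : ℝ := absSum A + absSum Aᵀ + (∑ k, absSum ((N k)ᵀ) * absSum (N k)) + C with hK₁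
  have hK₁0 : 0 ≤ K₁ := by
    have := absSum_nonneg A
    have := absSum_nonneg Aᵀ
    have : 0 ≤ ∑ k, absSum ((N k)ᵀ) * absSum (N k) :=
      Finset.sum_nonneg fun k _ => mul_nonneg (absSum_nonneg _) (absSum_nonneg _)
    positivity
  -- matrix identity for the antisymmetric part
  have hFD : ∀ t, F t - (F t)ᵀ
      = A * (Z t - (Z t)ᵀ) + (Z t - (Z t)ᵀ) * Aᵀ
        + (∑ k, N k * (Z t - (Z t)ᵀ) * (N k)ᵀ) + c t • (Z t - (Z t)ᵀ) := by
    intro t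
    have hTr : (F t)ᵀ = A * (Z t)ᵀ + (Z t)ᵀ * Aᵀ + (∑ k, N k * (Z t)ᵀ * (N k)ᵀ)
        + c t • (Z t)ᵀ := by
      simp only [hF, transpose_add, transpose_mul, transpose_smul, transpose_sum,
        transpose_transpose, Matrix.mul_assoc]
      abel
    rw [hTr, hF]
    simp only [Matrix.mul_sub, Matrix.sub_mul, smul_sub, Finset.sum_sub_distrib]
    abel
  have bound : ∀ t ∈ Set.Icc s t₀, ‖P' t‖ ≤ K₁ * ‖P t‖ + 0 := by
    intro t ht
    have hb : 0 ≤ ‖P t‖ := norm_nonneg _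
    have hDm : ∀ k l, |(Z t - (Z t)ᵀ) k l| ≤ ‖P t‖ := by
      intro k l
      have h1 : ‖P t k l‖ ≤ ‖P t k‖ := norm_le_pi_norm (P t k) l
      have h2 : ‖P t k‖ ≤ ‖P t‖ := norm_le_pi_norm (P t) k
      have : (Z t - (Z t)ᵀ) k l = P t k l := rfl
      rw [this]
      exact le_trans (le_of_eq (Real.norm_eq_abs _).symm) (le_trans h1 h2)
    rw [add_zero]
    rw [pi_norm_le_iff_of_nonneg (mul_nonneg hK₁0 hb)]
    intro i
    rw [pi_norm_le_iff_of_nonneg (mul_nonneg hK₁0 hb)]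
    intro j
    have hentry : P' t i j = (F t - (F t)ᵀ) i j := by
      simp [hP'def, Matrix.sub_apply, transpose_apply]
    rw [Real.norm_eq_abs, hentry, hFD t]
    set Dm := Z t - (Z t)ᵀ with hDmdef
    have e1 : |(A * Dm) i j| ≤ absSum A * ‖P t‖ := entry_abs_le_mul_left _ _ hb hDm i j
    have e2 : |(Dm * Aᵀ) i j| ≤ absSum Aᵀ * ‖P t‖ := entry_abs_le_mul_right _ _ hb hDm i j
    have e3 : |(∑ k, N k * Dm * (N k)ᵀ) i j|
        ≤ (∑ k, absSum ((N k)ᵀ) * absSum (N k)) * ‖P t‖ := by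
      have hsumapp : (∑ k, N k * Dm * (N k)ᵀ) i j = ∑ k, (N k * Dm * (N k)ᵀ) i j := by
        simp [Matrix.sum_apply]
      rw [hsumapp, Finset.sum_mul]
      refine le_trans (Finset.abs_sum_le_sum_abs _ _) (Finset.sum_le_sum fun k _ => ?_)
      have hmid : ∀ a b', |(N k * Dm) a b'| ≤ absSum (N k) * ‖P t‖ :=
        fun a b' => entry_abs_le_mul_left _ _ hb hDm a b'
      have := entry_abs_le_mul_right (N k * Dm) ((N k)ᵀ)
        (b := absSum (N k) * ‖P t‖) (mul_nonneg (absSum_nonneg _) hb) hmid i j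
      calc |(N k * Dm * (N k)ᵀ) i j| ≤ absSum ((N k)ᵀ) * (absSum (N k) * ‖P t‖) := this
        _ = absSum ((N k)ᵀ) * absSum (N k) * ‖P t‖ := by ring
    have e4 : |(c t • Dm) i j| ≤ C * ‖P t‖ := by
      have : (c t • Dm) i j = c t * Dm i j := rfl
      rw [this, abs_mul]
      have h1 : |c t| ≤ C := le_trans (le_of_eq (Real.norm_eq_abs _).symm) (hC t ht)
      exact mul_le_mul h1 (hDm i j) (abs_nonneg _) hC0
    have expand : (A * Dm + Dm * Aᵀ + (∑ k, N k * Dm * (N k)ᵀ) + c t • Dm) i j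
        = (A * Dm) i j + (Dm * Aᵀ) i j + (∑ k, N k * Dm * (N k)ᵀ) i j + (c t • Dm) i j := by
      simp [Matrix.add_apply]
    rw [expand]
    calc |(A * Dm) i j + (Dm * Aᵀ) i j + (∑ k, N k * Dm * (N k)ᵀ) i j + (c t • Dm) i j|
        ≤ |(A * Dm) i j + (Dm * Aᵀ) i j + (∑ k, N k * Dm * (N k)ᵀ) i j| + |(c t • Dm) i j| :=
          abs_add_le _ _
      _ ≤ (|(A * Dm) i j + (Dm * Aᵀ) i j| + |(∑ k, N k * Dm * (N k)ᵀ) i j|) + |(c t • Dm) i j| :=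
          add_le_add_left (abs_add_le _ _) _
      _ ≤ ((|(A * Dm) i j| + |(Dm * Aᵀ) i j|) + |(∑ k, N k * Dm * (N k)ᵀ) i j|) + |(c t • Dm) i j| :=
          add_le_add_left (add_le_add_left (abs_add_le _ _) _) _
      _ ≤ ((absSum A * ‖P t‖ + absSum Aᵀ * ‖P t‖) + (∑ k, absSum ((N k)ᵀ) * absSum (N k)) * ‖P t‖)
            + C * ‖P t‖ := by
          exact add_le_add (add_le_add (add_le_add e1 e2) e3) e4
      _ = K₁ * ‖P t‖ := by rw [hK₁]; ring
  -- continuity of P on the interval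
  have hcont : ContinuousOn P (Set.Icc s t₀) := by
    intro t ht
    have : ContinuousAt P t := by
      rw [continuousAt_pi]; intro i
      rw [continuousAt_pi]; intro j
      exact ((hZ t ht.1 i j).continuousAt).sub ((hZ t ht.1 j i).continuousAt)
    exact this.continuousWithinAt
  have ha : ‖P s‖ ≤ 0 := by
    have hPs : P s = 0 := by
      funext i j
      have := congrFun (congrFun hZs i) j
      simp only [transpose_apply] at this
      simp [hPdef, this]
    simp [hPs]
  have hf' : ∀ x ∈ Set.Ico s t₀, HasDerivWithinAt P (P' x) (Set.Ici x) x :=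
    fun x hx => (hP x hx.1).hasDerivWithinAt
  have hmain := norm_le_gronwallBound_of_norm_deriv_right_le hcont hf' ha
    (fun x hx => bound x ⟨hx.1, le_of_lt hx.2⟩) t₀ (Set.right_mem_Icc.2 ht₀)
  rw [gronwallBound_ε0_δ0] at hmain
  have hP0 : P t₀ = 0 := norm_le_zero_iff.1 hmain
  ext i j
  have := congrFun (congrFun hP0 j) i
  simp only [hPdef, Pi.zero_apply] at this
  rw [transpose_apply]
  linarith [this]


end MGL

/-- **Gronwall lemma for matrix differential equations.**
If `X` satisfies the matrix differential inequality
`Ẋ(t) ≼ A X(t) + X(t) Aᵀ + Σ_k N_k X(t) N_kᵀ + ‖u⁰(t)‖₂² X(t)` on `[s,∞)`,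
`Z` solves the corresponding matrix differential equation, and `X(s) ≼ Z(s)`,
then `X(t) ≼ Z(t)` for all `t ≥ s`. -/
theorem matrix_gronwall_lemma
    {n m : ℕ}
    (A : Matrix (Fin n) (Fin n) ℝ) (N : Fin m → Matrix (Fin n) (Fin n) ℝ)
    (s : ℝ) (hs : 0 ≤ s) (u : ℝ → Fin m → ℝ) (hu : Continuous u)
    (u0 : ℝ → Fin m → ℝ) (hu0 : ∀ t k, u0 t k = if N k = 0 then 0 else u t k)
    (X X' Z : ℝ → Matrix (Fin n) (Fin n) ℝ)
    -- X is a continuously differentiable symmetric-matrix-valued function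
    (hXsymm : ∀ t ∈ Set.Ici s, (X t).IsSymm)
    (hX' : ∀ t ∈ Set.Ici s, ∀ i j, HasDerivAt (fun τ => X τ i j) (X' t i j) t)
    (hX'cont : ∀ i j, ContinuousOn (fun t => X' t i j) (Set.Ici s))
    -- the matrix differential inequality for X
    (hXineq : ∀ t ∈ Set.Ici s,
      (A * X t + X t * Aᵀ + (∑ k, N k * X t * (N k)ᵀ) + (∑ k, (u0 t k) ^ 2) • X t
        - X' t).PosSemidef)
    -- Z solves the matrix differential equation
    (hZ : ∀ t ∈ Set.Ici s, ∀ i j, HasDerivAt (fun τ => Z τ i j)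
      ((A * Z t + Z t * Aᵀ + (∑ k, N k * Z t * (N k)ᵀ) + (∑ k, (u0 t k) ^ 2) • Z t) i j) t)
    -- X(s) ≼ Z(s)
    (hinit : (Z s - X s).PosSemidef) :
    ∀ t ∈ Set.Ici s, (Z t - X t).PosSemidef := by
  have hstar : ∀ y : Fin n → ℝ, star y = y := fun y => funext fun i => star_trivial _
  have hcont : Continuous (fun t => ∑ k, (u0 t k) ^ 2) := by
    refine continuous_finset_sum _ fun k _ => ?_
    have hk : Continuous fun t => u0 t k := by
      have he : (fun t => u0 t k) = fun t => if N k = 0 then 0 else u t k := by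
        funext t; exact hu0 t k
      rw [he]
      by_cases h : N k = 0
      · simp only [h, if_true]; exact continuous_const
      · simp only [h, if_false]; exact (continuous_apply k).comp hu
    exact hk.pow 2
  have hc0 : ∀ t, 0 ≤ ∑ k, (u0 t k) ^ 2 := fun t => Finset.sum_nonneg fun k _ => sq_nonneg _
  have hXsymm' : ∀ t ∈ Set.Ici s, (X t)ᵀ = X t := fun t ht => (hXsymm t ht).eq
  have hZsymm : ∀ t ∈ Set.Ici s, (Z t)ᵀ = Z t := by
    refine MGL.Z_symm A N s (fun t => ∑ k, (u0 t k) ^ 2) hcont Z hZ ?_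
    have h1 : (Z s - X s)ᵀ = Z s - X s := by
      have h := hinit.1
      rwa [Matrix.IsHermitian, conjTranspose_eq_transpose_of_trivial] at h
    rw [transpose_sub, hXsymm' s Set.self_mem_Ici] at h1
    exact sub_left_inj.1 h1
  have hXineq' : ∀ t ∈ Set.Ici s, ∀ y : Fin n → ℝ,
      0 ≤ y ⬝ᵥ ((A * X t + X t * Aᵀ + (∑ k, N k * X t * (N k)ᵀ)
        + (∑ k, (u0 t k) ^ 2) • X t - X' t) *ᵥ y) := by
    intro t ht y
    have h := (hXineq t ht).dotProduct_mulVec_nonneg y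
    rwa [hstar y] at h
  have hinit' : ∀ y : Fin n → ℝ, 0 ≤ y ⬝ᵥ ((Z s - X s) *ᵥ y) := by
    intro y
    have h := hinit.dotProduct_mulVec_nonneg y
    rwa [hstar y] at h
  intro T hT
  obtain ⟨C, hC⟩ := (isCompact_Icc (a := s) (b := T)).exists_bound_of_continuousOn
    hcont.continuousOn
  have hcC : ∀ t ∈ Set.Icc s T, (∑ k, (u0 t k) ^ 2) ≤ C := fun t ht =>
    le_trans (le_abs_self _) (le_of_eq_of_le (Real.norm_eq_abs _).symm (hC t ht))
  set K : ℝ := (1 + MGL.frobSq A) + (∑ k, MGL.frobSq ((N k)ᵀ)) + C + 1 with hK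
  have key : ∀ ε : ℝ, 0 < ε → ∀ y : Fin n → ℝ, y ≠ 0 →
      0 < y ⬝ᵥ ((Z T - X T + (ε * Real.exp (K * (T - s))) • 1) *ᵥ y) := by
    intro ε hε
    have hφpos : ∀ t : ℝ, 0 < ε * Real.exp (K * (t - s)) :=
      fun t => mul_pos hε (Real.exp_pos _)
    have hφd : ∀ t : ℝ, HasDerivAt (fun τ => ε * Real.exp (K * (τ - s)))
        (K * (ε * Real.exp (K * (t - s)))) t := by
      intro t
      have h1 : HasDerivAt (fun τ : ℝ => K * (τ - s)) K t := by
        simpa using ((hasDerivAt_id t).sub_const s).const_mul K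
      have h2 := (Real.hasDerivAt_exp (K * (t - s))).comp t h1
      have h3 := h2.const_mul ε
      rw [show K * (ε * Real.exp (K * (t - s))) = ε * (Real.exp (K * (t - s)) * K) by ring]
      exact h3
    exact MGL.posdef_perturbed A N s T hT (fun t => ∑ k, (u0 t k) ^ 2) hc0 C hcC K hK
      X X' Z (fun t => Z t - X t + (ε * Real.exp (K * (t - s))) • 1)
      (fun t => ε * Real.exp (K * (t - s))) hφpos hφd hXsymm' hZsymm hX' hXineq' hZ
      (fun t => rfl) hinit' T (Set.right_mem_Icc.2 hT)
  refine Matrix.PosSemidef.of_dotProduct_mulVec_nonneg ?_ ?_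
  · show (Z T - X T)ᴴ = Z T - X T
    rw [conjTranspose_eq_transpose_of_trivial, transpose_sub, hZsymm T hT, hXsymm' T hT]
  · intro y
    rw [hstar y]
    rcases eq_or_ne y 0 with rfl | hy
    · simp
    by_contra hneg
    push_neg at hneg
    have hyy : 0 < y ⬝ᵥ y :=
      lt_of_le_of_ne (MGL.dot_self_nonneg y)
        fun h' => hy (dotProduct_self_eq_zero.1 h'.symm)
    have hE : 0 < Real.exp (K * (T - s)) * (y ⬝ᵥ y) := mul_pos (Real.exp_pos _) hyy
    set q : ℝ := y ⬝ᵥ ((Z T - X T) *ᵥ y) with hq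
    set ε : ℝ := (-q) / (2 * (Real.exp (K * (T - s)) * (y ⬝ᵥ y))) with hε
    have hεpos : 0 < ε := div_pos (neg_pos.2 hneg) (by positivity)
    have h := key ε hεpos y hy
    rw [add_mulVec, smul_mulVec, one_mulVec, dotProduct_add, dotProduct_smul,
      smul_eq_mul] at h
    have hval : ε * Real.exp (K * (T - s)) * (y ⬝ᵥ y) = -q / 2 := by
      rw [hε]
      field_simp
    rw [← hq] at h
    nlinarith [h, hval]
end

section
/- Let x : [s,∞) → ℝ^n be a continuously differentiable solution of the homogeneous bilinear equation ẋ(t) = A x(t) + Σ_{k=1}^m N_k x(t) u_k(t) with x(s) = x₀, and let Z̄(·, x₀x₀^T) be the solution of Ż̄ = A Z̄ + Z̄ A^T + Σ_{k=1}^m N_k Z̄ N_k^T with Z̄(0) = x₀ x₀^T. Then for all t ≥ s, x(t) x(t)^T ≼ exp(∫_s^t ‖u⁰(τ)‖₂² dτ) · Z̄(t−s, x₀x₀^T). -/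
open Matrix MeasureTheory
open scoped Classical

section HseAux
variable {n m : ℕ}

lemma hse_quad_eq (M : Matrix (Fin n) (Fin n) ℝ) (v : Fin n → ℝ) :
    ∑ i, ∑ j, v i * M i j * v j = v ⬝ᵥ M *ᵥ v := by
  simp only [dotProduct, Matrix.mulVec, Finset.mul_sum]
  exact Finset.sum_congr rfl fun i _ => Finset.sum_congr rfl fun j _ => by ring

lemma hse_vecMulVec_mulVec (p r v : Fin n → ℝ) :
    (vecMulVec p r) *ᵥ v = (r ⬝ᵥ v) • p := by
  ext i
  simp only [Matrix.mulVec, vecMulVec_apply, dotProduct, Pi.smul_apply, smul_eq_mul,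
    Finset.sum_mul]
  exact Finset.sum_congr rfl fun j _ => by ring

lemma hse_psd_quad {M : Matrix (Fin n) (Fin n) ℝ} (hM : M.PosSemidef) (v : Fin n → ℝ) :
    0 ≤ v ⬝ᵥ M *ᵥ v := by
  have := hM.dotProduct_mulVec_nonneg v
  simpa using this

lemma hse_psd_kernel {M : Matrix (Fin n) (Fin n) ℝ} (hM : M.PosSemidef) (v : Fin n → ℝ)
    (h : v ⬝ᵥ M *ᵥ v = 0) : M *ᵥ v = 0 := by
  rw [← hM.dotProduct_mulVec_zero_iff]
  simpa using h

lemma hse_sum_mulVec (F : Fin m → Matrix (Fin n) (Fin n) ℝ) (v : Fin n → ℝ) :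
    (∑ k, F k) *ᵥ v = ∑ k, F k *ᵥ v := by
  ext i
  simp only [Matrix.mulVec, dotProduct, Finset.sum_apply, Matrix.sum_apply, Finset.sum_mul]
  rw [Finset.sum_comm]

lemma hse_dot_sum (v : Fin n → ℝ) (g : Fin m → (Fin n → ℝ)) :
    v ⬝ᵥ (∑ k, g k) = ∑ k, v ⬝ᵥ g k := by
  simp only [dotProduct, Finset.sum_apply, Finset.mul_sum]
  rw [Finset.sum_comm]

lemma hse_dot_self_nonneg (v : Fin n → ℝ) : 0 ≤ v ⬝ᵥ v :=
  Finset.sum_nonneg fun i _ => mul_self_nonneg (v i)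

lemma hse_abs_le_one {v : Fin n → ℝ} (hv : v ⬝ᵥ v = 1) : ∀ i, |v i| ≤ 1 := by
  intro i
  rw [abs_le_one_iff_mul_self_le_one]
  calc v i * v i ≤ ∑ j, v j * v j :=
        Finset.single_le_sum (f := fun j => v j * v j)
          (fun j _ => mul_self_nonneg (v j)) (Finset.mem_univ i)
    _ = 1 := hv

lemma hse_quad_abs_le (M : Matrix (Fin n) (Fin n) ℝ) (v : Fin n → ℝ) (hv : ∀ i, |v i| ≤ 1) :
    |v ⬝ᵥ M *ᵥ v| ≤ ∑ i, ∑ j, |M i j| := by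
  rw [← hse_quad_eq]
  calc |∑ i, ∑ j, v i * M i j * v j| ≤ ∑ i, |∑ j, v i * M i j * v j| :=
        Finset.abs_sum_le_sum_abs _ _
    _ ≤ ∑ i, ∑ j, |v i * M i j * v j| :=
        Finset.sum_le_sum fun i _ => Finset.abs_sum_le_sum_abs _ _
    _ ≤ ∑ i, ∑ j, |M i j| := by
        refine Finset.sum_le_sum fun i _ => Finset.sum_le_sum fun j _ => ?_
        rw [abs_mul, abs_mul]
        calc |v i| * |M i j| * |v j| ≤ 1 * |M i j| * 1 := by
              apply mul_le_mul (mul_le_mul (hv i) le_rfl (abs_nonneg _) zero_le_one) (hv j)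
                (abs_nonneg _)
              positivity
          _ = |M i j| := by ring

lemma hse_quad_le (M : Matrix (Fin n) (Fin n) ℝ) (v : Fin n → ℝ) (hv : ∀ i, |v i| ≤ 1) :
    v ⬝ᵥ M *ᵥ v ≤ ∑ i, ∑ j, |M i j| :=
  le_trans (le_abs_self _) (hse_quad_abs_le M v hv)

lemma hse_mul3 (B Z C : Matrix (Fin n) (Fin n) ℝ) (i j : Fin n) :
    (B * Z * C) i j = ∑ p, ∑ l, B i l * Z l p * C p j := by
  simp [Matrix.mul_apply, Finset.sum_mul]

lemma hse_symmODE (A : Matrix (Fin n) (Fin n) ℝ)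
    (N : Fin m → Matrix (Fin n) (Fin n) ℝ)
    (Zbar : ℝ → Matrix (Fin n) (Fin n) ℝ)
    (h0 : ∀ i j, Zbar 0 i j = Zbar 0 j i)
    (hZ : ∀ t : ℝ, 0 ≤ t → ∀ i j, HasDerivAt (fun τ => Zbar τ i j)
      ((A * Zbar t + Zbar t * Aᵀ + ∑ k, N k * Zbar t * (N k)ᵀ) i j) t) :
    ∀ t : ℝ, 0 ≤ t → ∀ i j, Zbar t i j = Zbar t j i := by
  set L : (Fin n → Fin n → ℝ) →ₗ[ℝ] (Fin n → Fin n → ℝ) :=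
    { toFun := fun M i j => (∑ l, A i l * M l j) + (∑ l, M i l * A j l)
        + ∑ k, ∑ p, ∑ l, N k i l * M l p * N k j p
      map_add' := by
        intro M M'
        funext i j
        simp only [Pi.add_apply, mul_add, add_mul, Finset.sum_add_distrib]
        ring
      map_smul' := by
        intro r M
        funext i j
        have e1 : ∀ l : Fin n, A i l * (r * M l j) = r * (A i l * M l j) := fun l => by ring
        have e2 : ∀ l : Fin n, r * M i l * A j l = r * (M i l * A j l) := fun l => by ring
        have e3 : ∀ (k : Fin m) (p l : Fin n),
            N k i l * (r * M l p) * N k j p = r * (N k i l * M l p * N k j p) := by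
          intros; ring
        simp only [Pi.smul_apply, smul_eq_mul, RingHom.id_apply, e1, e2, e3,
          ← Finset.mul_sum, mul_add] }
    with hL
  have key : ∀ (Z : Matrix (Fin n) (Fin n) ℝ) (i j : Fin n),
      (A * Z + Z * Aᵀ + ∑ k, N k * Z * (N k)ᵀ) i j
        = (∑ l, A i l * Z l j) + (∑ l, Z i l * A j l)
          + ∑ k, ∑ p, ∑ l, N k i l * Z l p * N k j p := by
    intro Z i j
    simp only [Matrix.add_apply, Matrix.mul_apply, Matrix.transpose_apply,
      Finset.sum_apply, Matrix.sum_apply]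
    congr 1
    exact Finset.sum_congr rfl fun k _ => hse_mul3 (N k) Z (N k)ᵀ i j
  set f : ℝ → (Fin n → Fin n → ℝ) := fun t i j => Zbar t i j - Zbar t j i with hf_def
  have hderiv : ∀ t : ℝ, 0 ≤ t → HasDerivAt f (L (f t)) t := by
    intro t ht
    rw [hasDerivAt_pi]
    intro i
    rw [hasDerivAt_pi]
    intro j
    have h1 := (hZ t ht i j).sub (hZ t ht j i)
    convert h1 using 1
    · rfl
    rw [key, key]
    simp only [hL, LinearMap.coe_mk, AddHom.coe_mk, hf_def]
    simp only [mul_sub, sub_mul, Finset.sum_sub_distrib]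
    have swap1 : ∑ k, ∑ p, ∑ l, N k i l * Zbar t p l * N k j p
        = ∑ k, ∑ p, ∑ l, N k j l * Zbar t l p * N k i p := by
      refine Finset.sum_congr rfl fun k _ => ?_
      rw [Finset.sum_comm]
      exact Finset.sum_congr rfl fun a _ => Finset.sum_congr rfl fun b _ => by ring
    have c2 : (∑ l, Zbar t l i * A j l) = ∑ l, A j l * Zbar t l i :=
      Finset.sum_congr rfl fun l _ => by ring
    have c3 : (∑ l, A i l * Zbar t j l) = ∑ l, Zbar t j l * A i l :=
      Finset.sum_congr rfl fun l _ => by ring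
    rw [swap1, c2, c3]
    ring
  have hcont : ∀ t : ℝ, 0 ≤ t → ContinuousAt f t := fun t ht => (hderiv t ht).continuousAt
  intro t ht i j
  have heq := ODE_solution_unique (v := fun _ M => (LinearMap.toContinuousLinearMap L) M)
    (K := ‖LinearMap.toContinuousLinearMap L‖₊)
    (fun _ => (LinearMap.toContinuousLinearMap L).lipschitz)
    (f := f) (g := fun _ => 0) (a := 0) (b := t)
    (fun τ hτ => (hcont τ hτ.1).continuousWithinAt)
    (fun τ hτ => by
      have := (hderiv τ hτ.1).hasDerivWithinAt (s := Set.Ici τ)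
      simpa using this)
    continuousOn_const
    (fun τ hτ => by simpa using (hasDerivWithinAt_const τ (Set.Ici τ) (0 : Fin n → Fin n → ℝ)))
    (by funext i j; simp [hf_def, h0 i j])
  have := congrFun (congrFun (heq ⟨ht, le_rfl⟩) i) j
  simpa [hf_def, sub_eq_zero] using this

set_option maxHeartbeats 1000000 in
/-- Core algebraic positivity at the touching time. -/
lemma hse_dpos (A : Matrix (Fin n) (Fin n) ℝ) (N : Fin m → Matrix (Fin n) (Fin n) ℝ)
    (uu uu0 : Fin m → ℝ) (huu0 : ∀ k, uu0 k = if N k = 0 then 0 else uu k)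
    (Pm Zb : Matrix (Fin n) (Fin n) ℝ) (xv xdv : Fin n → ℝ)
    (hxdv : xdv = A *ᵥ xv + ∑ k, uu k • (N k) *ᵥ xv)
    (w : Fin n → ℝ) (hw : w ⬝ᵥ w = 1)
    (γ cc Ee K' : ℝ) (hγ : 0 < γ)
    (hEZb : Ee • Zb = Pm + vecMulVec xv xv - γ • 1)
    (hPsd : Pm.PosSemidef) (hPmT : Pmᵀ = Pm) (hker : Pm *ᵥ w = 0)
    (hcc : cc = ∑ k, (uu0 k) ^ 2)
    (hK' : 1 + cc + (w ⬝ᵥ A *ᵥ w + w ⬝ᵥ Aᵀ *ᵥ w + ∑ k, w ⬝ᵥ (N k * (N k)ᵀ) *ᵥ w) ≤ K') :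
    0 < w ⬝ᵥ ((cc * Ee) • Zb + Ee • (A * Zb + Zb * Aᵀ + ∑ k, N k * Zb * (N k)ᵀ)
      + (γ * K') • (1 : Matrix (Fin n) (Fin n) ℝ)
      - (vecMulVec xdv xv + vecMulVec xv xdv)) *ᵥ w := by
  set Zx := vecMulVec xv xv with hZx
  set a : ℝ := xv ⬝ᵥ w with ha
  set α : ℝ := w ⬝ᵥ A *ᵥ xv with hα
  set b : Fin m → ℝ := fun k => w ⬝ᵥ (N k) *ᵥ xv with hb
  have hbk : ∀ k, w ⬝ᵥ (N k) *ᵥ xv = b k := fun k => rfl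
  have hM0 : (cc * Ee) • Zb = cc • (Pm + Zx - γ • 1) := by
    rw [← smul_smul, hEZb]
  have hRS : Ee • (A * Zb + Zb * Aᵀ + ∑ k, N k * Zb * (N k)ᵀ)
      = A * (Pm + Zx - γ • 1) + (Pm + Zx - γ • 1) * Aᵀ
        + ∑ k, N k * (Pm + Zx - γ • 1) * (N k)ᵀ := by
    rw [← hEZb, smul_add, smul_add, Matrix.mul_smul, Matrix.smul_mul, Finset.smul_sum]
    congr 1
    exact Finset.sum_congr rfl fun k _ => by rw [Matrix.mul_smul, Matrix.smul_mul]
  rw [hM0, hRS]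
  have qPm : w ⬝ᵥ Pm *ᵥ w = 0 := by rw [hker, dotProduct_zero]
  have qAPm : w ⬝ᵥ (A * Pm) *ᵥ w = 0 := by
    rw [← Matrix.mulVec_mulVec, hker, Matrix.mulVec_zero, dotProduct_zero]
  have hwPm : w ᵥ* Pm = 0 := by
    rw [← hPmT, Matrix.vecMul_transpose, hker]
  have qPmA : w ⬝ᵥ (Pm * Aᵀ) *ᵥ w = 0 := by
    rw [← Matrix.mulVec_mulVec, Matrix.dotProduct_mulVec, hwPm, zero_dotProduct]
  have qNPm : ∀ k, 0 ≤ w ⬝ᵥ (N k * Pm * (N k)ᵀ) *ᵥ w := by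
    intro k
    rw [← Matrix.mulVec_mulVec, ← Matrix.mulVec_mulVec, Matrix.dotProduct_mulVec,
      ← Matrix.transpose_transpose (N k), Matrix.vecMul_transpose, Matrix.transpose_transpose]
    exact hse_psd_quad hPsd _
  have qZx : w ⬝ᵥ Zx *ᵥ w = a * a := by
    rw [hZx, hse_vecMulVec_mulVec, dotProduct_smul, smul_eq_mul, dotProduct_comm w xv, ← ha]
  have qAZx : w ⬝ᵥ (A * Zx) *ᵥ w = a * α := by
    rw [← Matrix.mulVec_mulVec, hZx, hse_vecMulVec_mulVec, ← ha, Matrix.mulVec_smul,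
      dotProduct_smul, smul_eq_mul, ← hα]
  have qZxA : w ⬝ᵥ (Zx * Aᵀ) *ᵥ w = α * a := by
    rw [← Matrix.mulVec_mulVec, hZx, hse_vecMulVec_mulVec, dotProduct_smul, smul_eq_mul,
      Matrix.dotProduct_mulVec xv Aᵀ w, Matrix.vecMul_transpose, dotProduct_comm w xv, ← ha,
      dotProduct_comm (A *ᵥ xv) w, ← hα]
  have qNZx : ∀ k, w ⬝ᵥ (N k * Zx * (N k)ᵀ) *ᵥ w = b k * b k := by
    intro k
    rw [← Matrix.mulVec_mulVec, ← Matrix.mulVec_mulVec, Matrix.dotProduct_mulVec,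
      ← Matrix.transpose_transpose (N k), Matrix.vecMul_transpose, Matrix.transpose_transpose,
      hZx, hse_vecMulVec_mulVec, dotProduct_smul, smul_eq_mul]
    have h1 : xv ⬝ᵥ ((N k)ᵀ *ᵥ w) = b k := by
      rw [Matrix.dotProduct_mulVec xv (N k)ᵀ w, Matrix.vecMul_transpose,
        dotProduct_comm (N k *ᵥ xv) w, hbk]
    have h2 : ((N k)ᵀ *ᵥ w) ⬝ᵥ xv = b k := by
      rw [dotProduct_comm, h1]
    rw [h1, h2]
  have qone : w ⬝ᵥ (1 : Matrix (Fin n) (Fin n) ℝ) *ᵥ w = 1 := by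
    rw [Matrix.one_mulVec, hw]
  have qxd1 : w ⬝ᵥ (vecMulVec xdv xv) *ᵥ w = a * (w ⬝ᵥ xdv) := by
    rw [hse_vecMulVec_mulVec, dotProduct_smul, smul_eq_mul, dotProduct_comm w xdv, ← ha,
      dotProduct_comm xdv w]
  have qxd2 : w ⬝ᵥ (vecMulVec xv xdv) *ᵥ w = (xdv ⬝ᵥ w) * a := by
    rw [hse_vecMulVec_mulVec, dotProduct_smul, smul_eq_mul, dotProduct_comm w xv, ← ha]
  have hwxd : w ⬝ᵥ xdv = α + ∑ k, uu k * b k := by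
    rw [hxdv, dotProduct_add, hse_dot_sum, ← hα]
    congr 1
    refine Finset.sum_congr rfl fun k _ => ?_
    rw [dotProduct_smul, smul_eq_mul, hbk]
  have expand : w ⬝ᵥ (cc • (Pm + Zx - γ • 1)
      + (A * (Pm + Zx - γ • 1) + (Pm + Zx - γ • 1) * Aᵀ
        + ∑ k, N k * (Pm + Zx - γ • 1) * (N k)ᵀ)
      + (γ * K') • (1 : Matrix (Fin n) (Fin n) ℝ)
      - (vecMulVec xdv xv + vecMulVec xv xdv)) *ᵥ w
    = cc * (w ⬝ᵥ Pm *ᵥ w + w ⬝ᵥ Zx *ᵥ w - γ * (w ⬝ᵥ (1 : Matrix (Fin n) (Fin n) ℝ) *ᵥ w))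
      + (w ⬝ᵥ (A * Pm) *ᵥ w + w ⬝ᵥ (A * Zx) *ᵥ w - γ * (w ⬝ᵥ A *ᵥ w))
      + (w ⬝ᵥ (Pm * Aᵀ) *ᵥ w + w ⬝ᵥ (Zx * Aᵀ) *ᵥ w - γ * (w ⬝ᵥ Aᵀ *ᵥ w))
      + ((∑ k, w ⬝ᵥ (N k * Pm * (N k)ᵀ) *ᵥ w) + (∑ k, w ⬝ᵥ (N k * Zx * (N k)ᵀ) *ᵥ w)
          - γ * ∑ k, w ⬝ᵥ (N k * (N k)ᵀ) *ᵥ w)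
      + γ * K' * (w ⬝ᵥ (1 : Matrix (Fin n) (Fin n) ℝ) *ᵥ w)
      - (w ⬝ᵥ (vecMulVec xdv xv) *ᵥ w + w ⬝ᵥ (vecMulVec xv xdv) *ᵥ w) := by
    have hksum : ∑ k, N k * (Pm + Zx - γ • 1) * (N k)ᵀ
        = (∑ k, N k * Pm * (N k)ᵀ) + (∑ k, N k * Zx * (N k)ᵀ)
          - γ • ∑ k, N k * (N k)ᵀ := by
      rw [← Finset.sum_add_distrib, Finset.smul_sum, ← Finset.sum_sub_distrib]
      refine Finset.sum_congr rfl fun k _ => ?_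
      simp only [Matrix.mul_add, Matrix.mul_sub, Matrix.add_mul, Matrix.sub_mul,
        Matrix.mul_smul, Matrix.smul_mul, Matrix.mul_one]
    rw [hksum]
    simp only [Matrix.mul_add, Matrix.mul_sub, Matrix.add_mul, Matrix.sub_mul,
      Matrix.mul_smul, Matrix.smul_mul, Matrix.mul_one, Matrix.one_mul,
      Matrix.add_mulVec, Matrix.sub_mulVec, Matrix.smul_mulVec,
      hse_sum_mulVec, dotProduct_add, dotProduct_sub, dotProduct_smul, smul_eq_mul,
      hse_dot_sum]
    ring
  rw [expand, qPm, qZx, qAPm, qAZx, qPmA, qZxA, qone, qxd1, qxd2, hwxd]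
  have hbsum : ∑ k, w ⬝ᵥ (N k * Zx * (N k)ᵀ) *ᵥ w = ∑ k, b k * b k :=
    Finset.sum_congr rfl fun k _ => qNZx k
  rw [hbsum]
  have hwxd2 : xdv ⬝ᵥ w = α + ∑ k, uu k * b k := by rw [dotProduct_comm, hwxd]
  rw [hwxd2]
  have hNPm : 0 ≤ ∑ k, w ⬝ᵥ (N k * Pm * (N k)ᵀ) *ᵥ w :=
    Finset.sum_nonneg fun k _ => qNPm k
  have hR : 0 ≤ cc * (a * a) + (∑ k, b k * b k) - 2 * ∑ k, a * (uu k * b k) := by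
    have h1 : cc * (a * a) = ∑ k, (uu0 k) ^ 2 * (a * a) := by
      rw [hcc, Finset.sum_mul]
    have h2 : (2 : ℝ) * ∑ k, a * (uu k * b k) = ∑ k, 2 * (a * (uu k * b k)) := by
      rw [Finset.mul_sum]
    rw [h1, h2, ← Finset.sum_add_distrib, ← Finset.sum_sub_distrib]
    refine Finset.sum_nonneg fun k _ => ?_
    by_cases hk : N k = 0
    · have hb0 : b k = 0 := by rw [← hbk, hk, Matrix.zero_mulVec, dotProduct_zero]
      have hu0 : uu0 k = 0 := by rw [huu0 k, if_pos hk]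
      rw [hb0, hu0]
      ring_nf
      exact le_rfl
    · have hu0 : uu0 k = uu k := by rw [huu0 k, if_neg hk]
      rw [hu0]
      nlinarith [sq_nonneg (uu k * a - b k)]
  have hS2 : a * ∑ k, uu k * b k = ∑ k, a * (uu k * b k) := Finset.mul_sum _ _ _
  have hγK : γ * (1 + cc + (w ⬝ᵥ A *ᵥ w + w ⬝ᵥ Aᵀ *ᵥ w + ∑ k, w ⬝ᵥ (N k * (N k)ᵀ) *ᵥ w))
      ≤ γ * K' := mul_le_mul_of_nonneg_left hK' hγ.le
  linarith [hR, hNPm, hγK, hS2, hγ]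

end HseAux

set_option maxHeartbeats 1000000

/-- For the solution `x` of the homogeneous bilinear equation with
`x(s) = x₀` and the solution `Z̄(·, x₀x₀ᵀ)` of `Ż̄ = A Z̄ + Z̄ Aᵀ + Σ_k N_k Z̄ N_kᵀ`,
`Z̄(0) = x₀ x₀ᵀ`, one has
`x(t) x(t)ᵀ ≼ exp(∫_s^t ‖u⁰(τ)‖₂² dτ) Z̄(t−s, x₀x₀ᵀ)` for all `t ≥ s`. -/
theorem homogeneous_state_estimate
    {n m : ℕ}
    (A : Matrix (Fin n) (Fin n) ℝ) (N : Fin m → Matrix (Fin n) (Fin n) ℝ)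
    (s : ℝ) (hs : 0 ≤ s) (u : ℝ → Fin m → ℝ) (hu : Continuous u)
    (u0 : ℝ → Fin m → ℝ) (hu0 : ∀ t k, u0 t k = if N k = 0 then 0 else u t k)
    -- x solves the homogeneous bilinear equation on [s,∞) with x(s) = x₀
    (x : ℝ → Fin n → ℝ) (x0 : Fin n → ℝ) (hxs : x s = x0)
    (hx : ∀ t ∈ Set.Ici s, ∀ i, HasDerivAt (fun τ => x τ i)
      ((A.mulVec (x t) + ∑ k, u t k • (N k).mulVec (x t)) i) t)
    -- Z̄ solves the matrix ODE with Z̄(0) = x₀ x₀ᵀ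
    (Zbar : ℝ → Matrix (Fin n) (Fin n) ℝ)
    (hZbar0 : Zbar 0 = vecMulVec x0 x0)
    (hZbar : ∀ t : ℝ, 0 ≤ t → ∀ i j, HasDerivAt (fun τ => Zbar τ i j)
      ((A * Zbar t + Zbar t * Aᵀ + ∑ k, N k * Zbar t * (N k)ᵀ) i j) t) :
    ∀ t : ℝ, s ≤ t →
      (Real.exp (∫ τ in s..t, ∑ k, (u0 τ k) ^ 2) • Zbar (t - s)
        - vecMulVec (x t) (x t)).PosSemidef := by
  intro t₁ ht₁
  -- trivial case n = 0
  rcases Nat.eq_zero_or_pos n with hn0 | hnpos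
  · haveI : IsEmpty (Fin n) := by rw [hn0]; infer_instance
    constructor
    · ext i j
      exact isEmptyElim i
    · intro v
      rw [show v = 0 from Finsupp.ext fun i => isEmptyElim i]
      simp
  -- the scalar coefficient c and the exponential factor E
  set c : ℝ → ℝ := fun τ => ∑ k, (u0 τ k) ^ 2 with hc_def
  have hu0c : ∀ k, Continuous fun τ => u0 τ k := by
    intro k
    have : (fun τ => u0 τ k) = fun τ => if N k = 0 then 0 else u τ k :=
      funext fun τ => hu0 τ k
    rw [this]
    by_cases h : N k = 0
    · simp only [if_pos h]
      exact continuous_const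
    · simp only [if_neg h]
      exact (continuous_apply k).comp hu
  have hccont : Continuous c := by
    refine continuous_finset_sum _ fun k _ => ?_
    exact (hu0c k).pow 2
  have hcnn : ∀ τ, 0 ≤ c τ := fun τ => Finset.sum_nonneg fun k _ => sq_nonneg _
  set E : ℝ → ℝ := fun τ => Real.exp (∫ σ in s..τ, c σ) with hE_def
  have hEderiv : ∀ τ, HasDerivAt E (c τ * E τ) τ := by
    intro τ
    have h1 : HasDerivAt (fun σ => ∫ r in s..σ, c r) (c τ) τ :=
      intervalIntegral.integral_hasDerivAt_right (hccont.intervalIntegrable s τ)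
        (hccont.stronglyMeasurableAtFilter _ _) hccont.continuousAt
    have h2 := h1.exp
    simpa [hE_def, mul_comm] using h2
  have hEpos : ∀ τ, 0 < E τ := fun τ => Real.exp_pos _
  have hEs : E s = 1 := by simp [hE_def]
  -- symmetry of Zbar
  have hZsym : ∀ t : ℝ, 0 ≤ t → ∀ i j, Zbar t i j = Zbar t j i := by
    refine hse_symmODE A N Zbar ?_ hZbar
    intro i j
    rw [hZbar0]
    simp [vecMulVec_apply, mul_comm]
  -- bounds for the constant K'
  obtain ⟨Cu, hCu⟩ := (isCompact_Icc (a := s) (b := t₁)).exists_bound_of_continuousOn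
    hccont.continuousOn
  have hCu' : ∀ τ ∈ Set.Icc s t₁, c τ ≤ Cu := fun τ hτ =>
    le_trans (le_abs_self _) (by simpa [Real.norm_eq_abs] using hCu τ hτ)
  set CM : ℝ := (∑ i, ∑ j, |A i j|) + (∑ i, ∑ j, |Aᵀ i j|)
    + ∑ k, ∑ i, ∑ j, |(N k * (N k)ᵀ) i j| with hCM_def
  set K' : ℝ := 1 + Cu + CM with hK'_def
  -- the perturbed matrix function and its quadratic form
  set P : ℝ → ℝ → Matrix (Fin n) (Fin n) ℝ := fun ε τ =>
    E τ • Zbar (τ - s) - vecMulVec (x τ) (x τ)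
      + (ε * Real.exp (K' * (τ - s))) • (1 : Matrix (Fin n) (Fin n) ℝ) with hP_def
  set xd : ℝ → Fin n → ℝ := fun τ => A *ᵥ x τ + ∑ k, u τ k • (N k) *ᵥ x τ with hxd_def
  set D : ℝ → ℝ → Matrix (Fin n) (Fin n) ℝ := fun ε τ =>
    (c τ * E τ) • Zbar (τ - s)
      + E τ • (A * Zbar (τ - s) + Zbar (τ - s) * Aᵀ + ∑ k, N k * Zbar (τ - s) * (N k)ᵀ)
      + ((ε * Real.exp (K' * (τ - s))) * K') • (1 : Matrix (Fin n) (Fin n) ℝ)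
      - (vecMulVec (xd τ) (x τ) + vecMulVec (x τ) (xd τ)) with hD_def
  set qq : ℝ → (Fin n → ℝ) → ℝ → ℝ := fun ε v τ => v ⬝ᵥ (P ε τ) *ᵥ v with hqq_def
  have hPentry : ∀ ε τ i j, P ε τ i j
      = E τ * Zbar (τ - s) i j - x τ i * x τ j
        + (ε * Real.exp (K' * (τ - s))) * (1 : Matrix (Fin n) (Fin n) ℝ) i j := by
    intro ε τ i j
    simp [hP_def, Matrix.add_apply, Matrix.sub_apply, Matrix.smul_apply, vecMulVec_apply,
      smul_eq_mul]
  have hZshift : ∀ t : ℝ, s ≤ t → ∀ i j, HasDerivAt (fun τ => Zbar (τ - s) i j)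
      ((A * Zbar (t - s) + Zbar (t - s) * Aᵀ + ∑ k, N k * Zbar (t - s) * (N k)ᵀ) i j) t := by
    intro t ht i j
    have h1 := hZbar (t - s) (by linarith) i j
    have h2 : HasDerivAt (fun τ : ℝ => τ - s) 1 t := (hasDerivAt_id t).sub_const s
    have h3 := HasDerivAt.comp t h1 h2
    rw [mul_one] at h3
    exact h3
  have hPderiv : ∀ ε, ∀ t : ℝ, s ≤ t → ∀ i j,
      HasDerivAt (fun τ => P ε τ i j) (D ε t i j) t := by
    intro ε t ht i j
    have hfun : (fun τ => P ε τ i j) = fun τ =>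
        E τ * Zbar (τ - s) i j - x τ i * x τ j
          + (ε * Real.exp (K' * (τ - s))) * (1 : Matrix (Fin n) (Fin n) ℝ) i j :=
      funext fun τ => hPentry ε τ i j
    rw [hfun]
    have h1 := (hEderiv t).mul (hZshift t ht i j)
    have h2 := (hx t ht i).mul (hx t ht j)
    have hin : HasDerivAt (fun τ : ℝ => K' * (τ - s)) (K' * 1) t :=
      ((hasDerivAt_id t).sub_const s).const_mul K'
    have h3 := (hin.exp.const_mul ε).mul_const ((1 : Matrix (Fin n) (Fin n) ℝ) i j)
    have h4 := (h1.sub h2).add h3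
    convert h4 using 1
    · rfl
    · rfl
    · rfl
    simp only [hD_def, hxd_def, Matrix.add_apply, Matrix.sub_apply, Matrix.smul_apply,
      vecMulVec_apply, smul_eq_mul]
    ring
  have hqderiv : ∀ ε v, ∀ t : ℝ, s ≤ t →
      HasDerivAt (qq ε v) (v ⬝ᵥ (D ε t) *ᵥ v) t := by
    intro ε v t ht
    have hfun : qq ε v = fun τ => ∑ i, ∑ j, v i * P ε τ i j * v j :=
      funext fun τ => (hse_quad_eq _ v).symm
    rw [hfun, ← hse_quad_eq]
    exact HasDerivAt.fun_sum fun i _ => HasDerivAt.fun_sum fun j _ =>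
      ((hPderiv ε t ht i j).const_mul (v i)).mul_const (v j)
  have hPsym : ∀ ε, ∀ τ : ℝ, s ≤ τ → ∀ i j, P ε τ i j = P ε τ j i := by
    intro ε τ hτ i j
    rw [hPentry, hPentry, hZsym (τ - s) (by linarith) i j]
    have h1 : (1 : Matrix (Fin n) (Fin n) ℝ) i j = (1 : Matrix (Fin n) (Fin n) ℝ) j i := by
      by_cases h : i = j
      · rw [h]
      · rw [Matrix.one_apply_ne h, Matrix.one_apply_ne (Ne.symm h)]
    rw [h1]
    ring
  have hPs : ∀ ε, P ε s = ε • (1 : Matrix (Fin n) (Fin n) ℝ) := by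
    intro ε
    rw [hP_def]
    simp [sub_self, hZbar0, hxs, hEs, Real.exp_zero]
  have hqs : ∀ ε v, qq ε v s = ε * (v ⬝ᵥ v) := by
    intro ε v
    rw [hqq_def]
    simp only [hPs, Matrix.smul_mulVec, Matrix.one_mulVec, dotProduct_smul, smul_eq_mul]
  -- the key positivity claim with cushion ε
  have key : ∀ ε : ℝ, 0 < ε → ∀ t ∈ Set.Icc s t₁, ∀ v, 0 ≤ qq ε v t := by
    intro ε hε
    by_contra hcon
    push_neg at hcon
    obtain ⟨tb, htb, vb, hvb⟩ := hcon
    set Bad : Set ℝ := {τ | τ ∈ Set.Icc s t₁ ∧ ∃ v, qq ε v τ < 0} with hBad_def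
    have hBadne : Bad.Nonempty := ⟨tb, htb, vb, hvb⟩
    have hBadbdd : BddBelow Bad := ⟨s, fun τ hτ => hτ.1.1⟩
    set t₀ := sInf Bad with ht₀_def
    have ht₀s : s ≤ t₀ := le_csInf hBadne fun τ hτ => hτ.1.1
    have ht₀t₁ : t₀ ≤ t₁ := le_trans (csInf_le hBadbdd ⟨htb, vb, hvb⟩) htb.2
    have hgood : ∀ τ, s ≤ τ → τ < t₀ → ∀ v, 0 ≤ qq ε v τ := by
      intro τ hτs hτlt v
      by_contra hneg
      push_neg at hneg
      have hmem : τ ∈ Bad := ⟨⟨hτs, le_trans hτlt.le ht₀t₁⟩, v, hneg⟩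
      exact absurd (csInf_le hBadbdd hmem) (not_le.2 hτlt)
    have hgood₀ : ∀ v, 0 ≤ qq ε v t₀ := by
      intro v
      rcases eq_or_lt_of_le ht₀s with heq | hlt
      · rw [← heq, hqs]
        exact mul_nonneg hε.le (hse_dot_self_nonneg v)
      · have hct : ContinuousAt (qq ε v) t₀ := (hqderiv ε v t₀ ht₀s).continuousAt
        have htend : Filter.Tendsto (qq ε v) (nhdsWithin t₀ (Set.Iio t₀)) (nhds (qq ε v t₀)) :=
          hct.tendsto.mono_left nhdsWithin_le_nhds
        refine ge_of_tendsto htend ?_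
        filter_upwards [Ioo_mem_nhdsLT hlt] with τ hτ
        exact hgood τ hτ.1.le hτ.2 v
    -- minimizer over the sphere
    set S : Set (Fin n → ℝ) := {v | v ⬝ᵥ v = 1} with hS_def
    have hdotcont : Continuous fun v : Fin n → ℝ => v ⬝ᵥ v := by
      have : (fun v : Fin n → ℝ => v ⬝ᵥ v) = fun v => ∑ i, v i * v i := rfl
      rw [this]
      exact continuous_finset_sum _ fun i _ => (continuous_apply i).mul (continuous_apply i)
    have hScl : IsClosed S := isClosed_eq hdotcont continuous_const
    have hSsub : S ⊆ Metric.closedBall 0 1 := by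
      intro v hv
      rw [Metric.mem_closedBall, dist_zero_right]
      rw [pi_norm_le_iff_of_nonneg zero_le_one]
      intro i
      rw [Real.norm_eq_abs]
      exact hse_abs_le_one hv i
    have hScomp : IsCompact S := (isCompact_closedBall (0 : Fin n → ℝ) 1).of_isClosed_subset
      hScl hSsub
    have hSne : S.Nonempty := by
      refine ⟨Pi.single (⟨0, hnpos⟩ : Fin n) 1, ?_⟩
      show Pi.single (⟨0, hnpos⟩ : Fin n) (1 : ℝ) ⬝ᵥ Pi.single (⟨0, hnpos⟩ : Fin n) 1 = 1
      rw [single_dotProduct, one_mul, Pi.single_eq_same]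
    have hqqcv : Continuous fun v => qq ε v t₀ := by
      have : (fun v => qq ε v t₀) = fun v : Fin n → ℝ => ∑ i, ∑ j, v i * P ε t₀ i j * v j :=
        funext fun v => (hse_quad_eq _ v).symm
      rw [this]
      exact continuous_finset_sum _ fun i _ => continuous_finset_sum _ fun j _ =>
        ((continuous_apply i).mul continuous_const).mul (continuous_apply j)
    obtain ⟨w, hwS, hwmin⟩ := hScomp.exists_isMinOn hSne hqqcv.continuousOn
    have hwdot : w ⬝ᵥ w = 1 := hwS
    -- the minimum value at t₀ is exactly 0
    have hsmall : ∀ η : ℝ, 0 < η → qq ε w t₀ < η := by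
      intro η hη
      set Δ : ℝ → ℝ := fun τ => ∑ i, ∑ j, |P ε τ i j - P ε t₀ i j| with hΔ_def
      have htend : Filter.Tendsto Δ (nhds t₀) (nhds 0) := by
        have h0 : (0 : ℝ) = ∑ i : Fin n, ∑ j : Fin n, |P ε t₀ i j - P ε t₀ i j| := by simp
        rw [h0, hΔ_def]
        refine tendsto_finset_sum _ fun i _ => tendsto_finset_sum _ fun j _ => ?_
        exact (((hPderiv ε t₀ ht₀s i j).continuousAt).sub continuousAt_const).abs
      have hev : Δ ⁻¹' Set.Iio η ∈ nhds t₀ := htend (Iio_mem_nhds hη)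
      obtain ⟨δ, hδpos, hball⟩ := Metric.mem_nhds_iff.mp hev
      obtain ⟨bb, hbbBad, hbblt⟩ := Real.lt_sInf_add_pos hBadne hδpos
      have hbbt₀ : t₀ ≤ bb := csInf_le hBadbdd hbbBad
      have hbbball : bb ∈ Metric.ball t₀ δ := by
        rw [Metric.mem_ball, Real.dist_eq, abs_lt]
        constructor <;> [linarith; linarith [hbblt]]
      have hΔbb : Δ bb < η := hball hbbball
      obtain ⟨hbbIcc, v, hv⟩ := hbbBad
      have hvne : v ⬝ᵥ v ≠ 0 := by
        intro h0
        rw [dotProduct_self_eq_zero] at h0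
        rw [h0] at hv
        simp only [hqq_def, zero_dotProduct] at hv
        exact absurd hv (lt_irrefl 0)
      have hvpos : 0 < v ⬝ᵥ v := lt_of_le_of_ne (hse_dot_self_nonneg v) (Ne.symm hvne)
      set r : ℝ := Real.sqrt (v ⬝ᵥ v) with hr_def
      have hrpos : 0 < r := Real.sqrt_pos.2 hvpos
      have hrr : r * r = v ⬝ᵥ v := Real.mul_self_sqrt hvpos.le
      set v' : Fin n → ℝ := r⁻¹ • v with hv'_def
      have hscale : ∀ τ, qq ε v' τ = r⁻¹ * (r⁻¹ * qq ε v τ) := by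
        intro τ
        simp only [hqq_def, hv'_def]
        rw [smul_dotProduct, Matrix.mulVec_smul, dotProduct_smul]
        simp only [smul_eq_mul]
      have hv'S : v' ∈ S := by
        show v' ⬝ᵥ v' = 1
        rw [hv'_def, smul_dotProduct, dotProduct_smul]
        simp only [smul_eq_mul]
        rw [← hrr, show r⁻¹ * (r⁻¹ * (r * r)) = (r⁻¹ * r) * (r⁻¹ * r) by ring,
          inv_mul_cancel₀ hrpos.ne', one_mul]
      have habs : ∀ i, |v' i| ≤ 1 := hse_abs_le_one hv'S
      have hv'bb : qq ε v' bb < 0 := by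
        rw [hscale]
        have : 0 < r⁻¹ := inv_pos.2 hrpos
        exact mul_neg_of_pos_of_neg this (mul_neg_of_pos_of_neg this hv)
      have hdiff : |qq ε v' t₀ - qq ε v' bb| ≤ Δ bb := by
        have h1 : qq ε v' t₀ - qq ε v' bb = v' ⬝ᵥ (P ε t₀ - P ε bb) *ᵥ v' := by
          simp only [hqq_def]
          rw [Matrix.sub_mulVec, dotProduct_sub]
        rw [h1]
        have h2 := hse_quad_abs_le (P ε t₀ - P ε bb) v' habs
        refine le_trans h2 (le_of_eq ?_)
        rw [hΔ_def]
        exact Finset.sum_congr rfl fun i _ => Finset.sum_congr rfl fun j _ => by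
          rw [Matrix.sub_apply, abs_sub_comm]
      have hmin := isMinOn_iff.mp hwmin v' hv'S
      calc qq ε w t₀ ≤ qq ε v' t₀ := hmin
        _ ≤ qq ε v' bb + |qq ε v' t₀ - qq ε v' bb| := by
            have := le_abs_self (qq ε v' t₀ - qq ε v' bb)
            linarith
        _ < 0 + η := by linarith [hdiff, hΔbb, hv'bb]
        _ = η := by ring
    have hw0 : qq ε w t₀ = 0 := by
      refine le_antisymm ?_ (hgood₀ w)
      by_contra h
      push_neg at h
      exact absurd (hsmall _ h) (lt_irrefl _)
    -- t₀ is strictly greater than s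
    have ht₀lt : s < t₀ := by
      rcases eq_or_lt_of_le ht₀s with heq | h
      · exfalso
        rw [← heq, hqs, hwdot, mul_one] at hw0
        exact hε.ne' hw0
      · exact h
    -- the derivative at t₀ is nonpositive
    set d : ℝ := w ⬝ᵥ (D ε t₀) *ᵥ w with hd_def
    have hgd : HasDerivAt (qq ε w) d t₀ := hqderiv ε w t₀ ht₀s
    have hd0 : d ≤ 0 := by
      have hslope := hasDerivAt_iff_tendsto_slope.mp hgd
      have hmono : nhdsWithin t₀ (Set.Iio t₀) ≤ nhdsWithin t₀ {t₀}ᶜ :=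
        nhdsWithin_mono _ fun τ hτ => ne_of_lt hτ
      refine le_of_tendsto (hslope.mono_left hmono) ?_
      filter_upwards [Ioo_mem_nhdsLT ht₀lt] with τ hτ
      rw [slope_def_field]
      apply div_nonpos_of_nonneg_of_nonpos
      · rw [hw0]
        have := hgood τ hτ.1.le hτ.2 w
        linarith
      · linarith [hτ.2]
    -- but the derivative is positive: contradiction
    have hdpos : 0 < d := by
      have habsw : ∀ i, |w i| ≤ 1 := hse_abs_le_one hwdot
      have hPsd : (P ε t₀).PosSemidef := by
        refine Matrix.PosSemidef.of_dotProduct_mulVec_nonneg ?_ ?_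
        · show (P ε t₀)ᴴ = P ε t₀
          ext i j
          simp only [Matrix.conjTranspose_apply, star_trivial]
          exact hPsym ε t₀ ht₀s j i
        · intro v
          have := hgood₀ v
          simp only [hqq_def] at this
          simpa using this
      have hPmT : (P ε t₀)ᵀ = P ε t₀ := by
        ext i j
        rw [Matrix.transpose_apply]
        exact hPsym ε t₀ ht₀s j i
      have hw0' : w ⬝ᵥ (P ε t₀) *ᵥ w = 0 := by
        have := hw0
        simp only [hqq_def] at this
        exact this
      have hker : (P ε t₀) *ᵥ w = 0 := hse_psd_kernel hPsd w hw0'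
      have hEZb : E t₀ • Zbar (t₀ - s)
          = P ε t₀ + vecMulVec (x t₀) (x t₀)
            - (ε * Real.exp (K' * (t₀ - s))) • (1 : Matrix (Fin n) (Fin n) ℝ) := by
        simp only [hP_def]
        abel
      have hγpos : 0 < ε * Real.exp (K' * (t₀ - s)) :=
        mul_pos hε (Real.exp_pos _)
      have hKbound : 1 + c t₀ + (w ⬝ᵥ A *ᵥ w + w ⬝ᵥ Aᵀ *ᵥ w
          + ∑ k, w ⬝ᵥ (N k * (N k)ᵀ) *ᵥ w) ≤ K' := by
        have hcb : c t₀ ≤ Cu := hCu' t₀ ⟨ht₀s, ht₀t₁⟩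
        have hA1 : w ⬝ᵥ A *ᵥ w ≤ ∑ i, ∑ j, |A i j| := hse_quad_le A w habsw
        have hA2 : w ⬝ᵥ Aᵀ *ᵥ w ≤ ∑ i, ∑ j, |Aᵀ i j| := hse_quad_le Aᵀ w habsw
        have hA3 : ∑ k, w ⬝ᵥ (N k * (N k)ᵀ) *ᵥ w
            ≤ ∑ k, ∑ i, ∑ j, |(N k * (N k)ᵀ) i j| :=
          Finset.sum_le_sum fun k _ => hse_quad_le _ w habsw
        rw [hK'_def, hCM_def]
        linarith
      have hmain := hse_dpos A N (u t₀) (u0 t₀) (fun k => hu0 t₀ k)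
        (P ε t₀) (Zbar (t₀ - s)) (x t₀) (xd t₀) rfl w hwdot
        (ε * Real.exp (K' * (t₀ - s))) (c t₀) (E t₀) K' hγpos hEZb hPsd hPmT hker rfl
        hKbound
      rw [hd_def]
      have hDeq : D ε t₀ = (c t₀ * E t₀) • Zbar (t₀ - s)
          + E t₀ • (A * Zbar (t₀ - s) + Zbar (t₀ - s) * Aᵀ
            + ∑ k, N k * Zbar (t₀ - s) * (N k)ᵀ)
          + ((ε * Real.exp (K' * (t₀ - s))) * K') • (1 : Matrix (Fin n) (Fin n) ℝ)
          - (vecMulVec (xd t₀) (x t₀) + vecMulVec (x t₀) (xd t₀)) := rfl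
      rw [hDeq]
      exact hmain
    exact absurd hdpos (not_lt.2 hd0)
  -- conclude
  have hEt₁ : Real.exp (∫ τ in s..t₁, c τ) = E t₁ := rfl
  rw [hEt₁]
  have hfin : ∀ v : Fin n → ℝ,
      0 ≤ v ⬝ᵥ (E t₁ • Zbar (t₁ - s) - vecMulVec (x t₁) (x t₁)) *ᵥ v := by
    intro v
    set C0 : ℝ := Real.exp (K' * (t₁ - s)) * (v ⬝ᵥ v) with hC0_def
    have hC0nn : 0 ≤ C0 := mul_nonneg (Real.exp_pos _).le (hse_dot_self_nonneg v)
    have hqsplit : ∀ ε : ℝ,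
        qq ε v t₁ = v ⬝ᵥ (E t₁ • Zbar (t₁ - s) - vecMulVec (x t₁) (x t₁)) *ᵥ v + ε * C0 := by
      intro ε
      simp only [hqq_def, hP_def, hC0_def]
      rw [Matrix.add_mulVec, dotProduct_add, Matrix.smul_mulVec, Matrix.one_mulVec,
        dotProduct_smul, smul_eq_mul]
      ring
    by_contra hneg
    push_neg at hneg
    have hq0 : v ⬝ᵥ (E t₁ • Zbar (t₁ - s) - vecMulVec (x t₁) (x t₁)) *ᵥ v < 0 := hneg
    set q0 := v ⬝ᵥ (E t₁ • Zbar (t₁ - s) - vecMulVec (x t₁) (x t₁)) *ᵥ v with hq0_def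
    have hεpos : 0 < -q0 / (C0 + 1) := div_pos (neg_pos.2 hq0) (by linarith)
    have hk := key _ hεpos t₁ ⟨ht₁, le_rfl⟩ v
    rw [hqsplit] at hk
    have h1 : (-q0 / (C0 + 1)) * C0 < -q0 := by
      rw [div_mul_eq_mul_div, div_lt_iff₀ (by linarith : (0:ℝ) < C0 + 1)]
      nlinarith [neg_pos.2 hq0]
    linarith
  refine Matrix.PosSemidef.of_dotProduct_mulVec_nonneg ?_ ?_
  · show (E t₁ • Zbar (t₁ - s) - vecMulVec (x t₁) (x t₁))ᴴ
      = E t₁ • Zbar (t₁ - s) - vecMulVec (x t₁) (x t₁)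
    ext i j
    simp only [Matrix.conjTranspose_apply, Matrix.sub_apply, Matrix.smul_apply,
      vecMulVec_apply, smul_eq_mul, star_trivial]
    rw [hZsym (t₁ - s) (by linarith) j i]
    ring
  · intro v
    have := hfin v
    simpa using this
end

section
/- Let Y be a positive semidefinite matrix in ℝ^{n×n}, v₀ ∈ ℝ^n a vector with v₀^T Y v₀ = 0, and c ∈ ℝ with c ≥ 0. Then v₀^T (A Y + Y A^T + Σ_{k=1}^m N_k Y N_k^T + c Y) v₀ ≥ 0 for any matrices A, N_k ∈ ℝ^{n×n}. -/
open Matrix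

/-- Resolvent positivity of the generalized Lyapunov operator:
if `Y ≽ 0`, `v₀ᵀ Y v₀ = 0` and `c ≥ 0`, then
`v₀ᵀ (A Y + Y Aᵀ + Σ_k N_k Y N_kᵀ + c Y) v₀ ≥ 0`. -/
theorem lyapunov_operator_resolvent_positive
    {n m : ℕ}
    (A : Matrix (Fin n) (Fin n) ℝ) (N : Fin m → Matrix (Fin n) (Fin n) ℝ)
    (Y : Matrix (Fin n) (Fin n) ℝ) (hY : Y.PosSemidef)
    (v0 : Fin n → ℝ) (hv0 : v0 ⬝ᵥ Y.mulVec v0 = 0)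
    (c : ℝ) (hc : 0 ≤ c) :
    0 ≤ v0 ⬝ᵥ (A * Y + Y * Aᵀ + (∑ k, N k * Y * (N k)ᵀ) + c • Y).mulVec v0 := by
  have hYv : Y *ᵥ v0 = 0 := (hY.dotProduct_mulVec_zero_iff v0).mp (by simpa using hv0)
  have hYt : Yᵀ = Y := by simpa using hY.isHermitian.eq
  have hvY : v0 ᵥ* Y = 0 := by
    calc v0 ᵥ* Y = Yᵀ *ᵥ v0 := by rw [mulVec_transpose]
    _ = 0 := by rw [hYt, hYv]
  simp only [add_mulVec, dotProduct_add, smul_mulVec, dotProduct_smul]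
  have h1 : v0 ⬝ᵥ (A * Y) *ᵥ v0 = 0 := by
    rw [← mulVec_mulVec, hYv, mulVec_zero, dotProduct_zero]
  have h2 : v0 ⬝ᵥ (Y * Aᵀ) *ᵥ v0 = 0 := by
    rw [dotProduct_mulVec, ← vecMul_vecMul, hvY, zero_vecMul, zero_dotProduct]
  have h3 : v0 ⬝ᵥ Y *ᵥ v0 = 0 := by rw [hYv, dotProduct_zero]
  have h4 : 0 ≤ v0 ⬝ᵥ (∑ k, N k * Y * (N k)ᵀ) *ᵥ v0 := by
    have hsum : (∑ k, N k * Y * (N k)ᵀ) *ᵥ v0 = ∑ k, (N k * Y * (N k)ᵀ) *ᵥ v0 :=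
      map_sum (mulVec.addMonoidHomLeft v0) _ Finset.univ
    have hds : v0 ⬝ᵥ (∑ k, (N k * Y * (N k)ᵀ) *ᵥ v0) = ∑ k, v0 ⬝ᵥ (N k * Y * (N k)ᵀ) *ᵥ v0 := by
      simp only [dotProduct, Finset.sum_apply, Finset.mul_sum]
      exact Finset.sum_comm
    rw [hsum, hds]
    refine Finset.sum_nonneg fun k _ => ?_
    have : v0 ⬝ᵥ (N k * Y * (N k)ᵀ) *ᵥ v0 = ((N k)ᵀ *ᵥ v0) ⬝ᵥ Y *ᵥ ((N k)ᵀ *ᵥ v0) := by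
      rw [← mulVec_mulVec, ← mulVec_mulVec, dotProduct_mulVec, ← mulVec_transpose]
    rw [this]
    simpa using hY.dotProduct_mulVec_nonneg ((N k)ᵀ *ᵥ v0)
  rw [h1, h2, h3]
  simpa using h4
end

section
/- Let x solve the bilinear state equation ẋ(t) = A x(t) + B u(t) + Σ_{k=1}^m N_k x(t) u_k(t) with x(0) = 0, suppose σ(A⊗I + I⊗A + Σ_{k=1}^m N_k⊗N_k) ⊂ ℂ₋, let P solve A P + P A^T + Σ_{k=1}^m N_k P N_k^T = −B B^T, and let (v_k)_{k=1,…,n} be an orthonormal basis of eigenvectors of P with corresponding eigenvalues (λ_k)_{k=1,…,n}. Then for each k, sup_{t≥0} |⟨x(t), v_k⟩| ≤ λ_k^{1/2} · exp(0.5 ‖u⁰‖²_{L²}) · ‖u‖_{L²}. -/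
open Matrix MeasureTheory
open scoped Kronecker Classical


variable {n m : ℕ}

/-- positive definite (quadratic form) -/
def PDm (M : Matrix (Fin n) (Fin n) ℝ) : Prop := ∀ w : Fin n → ℝ, w ≠ 0 → 0 < w ⬝ᵥ M *ᵥ w

def PSDm (M : Matrix (Fin n) (Fin n) ℝ) : Prop := ∀ w : Fin n → ℝ, 0 ≤ w ⬝ᵥ M *ᵥ w

lemma PDm.psd {M : Matrix (Fin n) (Fin n) ℝ} (h : PDm M) : PSDm M := by
  intro w
  by_cases hw : w = 0
  · simp [hw]
  · exact (h w hw).le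

/-- vec of a matrix -/
def vecm (X : Matrix (Fin n) (Fin n) ℝ) : (Fin n × Fin n) → ℝ := fun p => X p.1 p.2

lemma kron_mulVec (A B X : Matrix (Fin n) (Fin n) ℝ) (p : Fin n × Fin n) :
    ((A ⊗ₖ B) *ᵥ vecm X) p = (A * X * Bᵀ) p.1 p.2 := by
  obtain ⟨i, j⟩ := p
  simp only [mulVec, dotProduct, vecm, ← Finset.univ_product_univ, Finset.sum_product,
    kroneckerMap_apply, Matrix.mul_apply, transpose_apply, Finset.sum_mul, Finset.mul_sum]
  rw [Finset.sum_comm]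
  apply Finset.sum_congr rfl; intro k _
  apply Finset.sum_congr rfl; intro l _
  ring

noncomputable section

def Lop (A : Matrix (Fin n) (Fin n) ℝ) (N : Fin m → Matrix (Fin n) (Fin n) ℝ)
    (X : Matrix (Fin n) (Fin n) ℝ) : Matrix (Fin n) (Fin n) ℝ :=
  A * X + X * Aᵀ + ∑ k, N k * X * (N k)ᵀ

lemma sum_mulVec' {ι κ : Type*} [Fintype ι] [Fintype κ] (M : ι → Matrix κ κ ℝ)
    (w : κ → ℝ) : (∑ k, M k) *ᵥ w = ∑ k, (M k) *ᵥ w := by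
  ext p
  simp only [mulVec, dotProduct, Finset.sum_apply, Matrix.sum_apply, Finset.sum_mul,
    Pi.smul_apply, smul_eq_mul]
  rw [Finset.sum_comm]

lemma K_mulVec (A : Matrix (Fin n) (Fin n) ℝ) (N : Fin m → Matrix (Fin n) (Fin n) ℝ)
    (X : Matrix (Fin n) (Fin n) ℝ) :
    (A ⊗ₖ (1 : Matrix (Fin n) (Fin n) ℝ) + (1 : Matrix (Fin n) (Fin n) ℝ) ⊗ₖ A
      + ∑ k, N k ⊗ₖ N k) *ᵥ vecm X = vecm (Lop A N X) := by
  ext p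
  rw [add_mulVec, add_mulVec, sum_mulVec' (fun k => N k ⊗ₖ N k)]
  have h1 : ((A ⊗ₖ (1 : Matrix (Fin n) (Fin n) ℝ)) *ᵥ vecm X) p = (A * X) p.1 p.2 := by
    rw [kron_mulVec]; simp
  have h2 : (((1 : Matrix (Fin n) (Fin n) ℝ) ⊗ₖ A) *ᵥ vecm X) p = (X * Aᵀ) p.1 p.2 := by
    rw [kron_mulVec]; simp [Matrix.one_mul]
  have h3 : ∀ k, ((N k ⊗ₖ N k) *ᵥ vecm X) p = (N k * X * (N k)ᵀ) p.1 p.2 := fun k =>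
    kron_mulVec _ _ _ _
  simp only [Pi.add_apply, Finset.sum_apply, h1, h2, h3, Lop, vecm, Matrix.add_apply,
    Finset.sum_apply, Matrix.sum_apply]

abbrev Kmat (A : Matrix (Fin n) (Fin n) ℝ) (N : Fin m → Matrix (Fin n) (Fin n) ℝ) :
    Matrix (Fin n × Fin n) (Fin n × Fin n) ℝ :=
  A ⊗ₖ (1 : Matrix (Fin n) (Fin n) ℝ) + (1 : Matrix (Fin n) (Fin n) ℝ) ⊗ₖ A + ∑ k, N k ⊗ₖ N k

lemma Amat_det_ne (A : Matrix (Fin n) (Fin n) ℝ) (N : Fin m → Matrix (Fin n) (Fin n) ℝ)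
    (hstab : ∀ z ∈ spectrum ℂ ((Kmat A N).map Complex.ofReal), z.re < 0)
    (σ : ℝ) (h0 : 0 ≤ σ) (h1 : σ ≤ 1) :
    IsUnit ((2 - 2*σ) • (1 : Matrix (Fin n × Fin n) (Fin n × Fin n) ℝ)
        - σ • Kmat A N).det := by
  rw [isUnit_iff_ne_zero]
  intro hdet
  rcases eq_or_lt_of_le h0 with h0' | h0'
  · rw [← h0'] at hdet
    simp only [mul_zero, sub_zero, zero_smul] at hdet
    rw [Matrix.det_smul, Matrix.det_one] at hdet
    norm_num at hdet
  · set z : ℝ := (2 - 2*σ)/σ with hz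
    have hσne : σ ≠ 0 := ne_of_gt h0'
    have hzσ : σ * z = 2 - 2*σ := by rw [hz, mul_comm, div_mul_cancel₀ _ hσne]
    have hfact : (2 - 2*σ) • (1 : Matrix (Fin n × Fin n) (Fin n × Fin n) ℝ)
        - σ • Kmat A N = σ • (z • 1 - Kmat A N) := by
      rw [smul_sub, smul_smul, hzσ]
    rw [hfact, Matrix.det_smul] at hdet
    have hdet2 : (z • (1 : Matrix (Fin n × Fin n) (Fin n × Fin n) ℝ) - Kmat A N).det = 0 := by
      have := pow_ne_zero (Fintype.card (Fin n × Fin n)) hσne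
      exact by
        rcases mul_eq_zero.mp hdet with h | h
        · exact absurd h this
        · exact h
    -- complexify
    have hmap : ((z • (1 : Matrix (Fin n × Fin n) (Fin n × Fin n) ℝ) - Kmat A N).map
        Complex.ofReal) = (z : ℂ) • (1 : Matrix (Fin n × Fin n) (Fin n × Fin n) ℂ)
          - (Kmat A N).map Complex.ofReal := by
      ext p q
      simp only [Matrix.map_apply, Matrix.sub_apply, Matrix.smul_apply, Matrix.one_apply,
        smul_eq_mul]
      by_cases hpq : p = q <;> simp [hpq]
    have hdetC : ((z : ℂ) • (1 : Matrix (Fin n × Fin n) (Fin n × Fin n) ℂ)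
        - (Kmat A N).map Complex.ofReal).det = 0 := by
      rw [← hmap]
      have hdc : ((z • (1 : Matrix (Fin n × Fin n) (Fin n × Fin n) ℝ) - Kmat A N).map
          Complex.ofReal).det = (((z • 1 - Kmat A N).det : ℝ) : ℂ) :=
        (RingHom.map_det Complex.ofRealHom _).symm
      rw [hdc, hdet2]
      simp
    have hmem : (z : ℂ) ∈ spectrum ℂ ((Kmat A N).map Complex.ofReal) := by
      rw [spectrum.mem_iff, Algebra.algebraMap_eq_smul_one]
      rw [Matrix.isUnit_iff_isUnit_det, isUnit_iff_ne_zero]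
      simpa using hdetC
    have := hstab _ hmem
    rw [Complex.ofReal_re] at this
    have hznn : 0 ≤ z := div_nonneg (by linarith) h0'.le
    linarith

def Amat (A : Matrix (Fin n) (Fin n) ℝ) (N : Fin m → Matrix (Fin n) (Fin n) ℝ) (σ : ℝ) :
    Matrix (Fin n × Fin n) (Fin n × Fin n) ℝ :=
  (2 - 2*σ) • (1 : Matrix (Fin n × Fin n) (Fin n × Fin n) ℝ) - σ • Kmat A N

lemma Amat_mulVec (A : Matrix (Fin n) (Fin n) ℝ) (N : Fin m → Matrix (Fin n) (Fin n) ℝ)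
    (σ : ℝ) (Y : Matrix (Fin n) (Fin n) ℝ) :
    Amat A N σ *ᵥ vecm Y = vecm ((2 - 2*σ) • Y - σ • Lop A N Y) := by
  rw [Amat, Matrix.sub_mulVec, Matrix.smul_mulVec, Matrix.smul_mulVec,
    Matrix.one_mulVec, K_mulVec]
  ext p
  simp [vecm]

def Xsol (A : Matrix (Fin n) (Fin n) ℝ) (N : Fin m → Matrix (Fin n) (Fin n) ℝ)
    (C : Matrix (Fin n) (Fin n) ℝ) (σ : ℝ) : Matrix (Fin n) (Fin n) ℝ :=
  Matrix.of fun i j => (((Amat A N σ)⁻¹) *ᵥ vecm C) (i, j)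

lemma vecm_Xsol (A : Matrix (Fin n) (Fin n) ℝ) (N : Fin m → Matrix (Fin n) (Fin n) ℝ)
    (C : Matrix (Fin n) (Fin n) ℝ) (σ : ℝ) :
    vecm (Xsol A N C σ) = ((Amat A N σ)⁻¹) *ᵥ vecm C := by
  funext p
  rfl

lemma Xsol_eq (A : Matrix (Fin n) (Fin n) ℝ) (N : Fin m → Matrix (Fin n) (Fin n) ℝ)
    (C : Matrix (Fin n) (Fin n) ℝ) (σ : ℝ)
    (hdet : IsUnit (Amat A N σ).det) :
    (2 - 2*σ) • Xsol A N C σ - σ • Lop A N (Xsol A N C σ) = C := by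
  have h1 : Amat A N σ *ᵥ vecm (Xsol A N C σ) = vecm C := by
    rw [vecm_Xsol, Matrix.mulVec_mulVec, Matrix.mul_nonsing_inv _ hdet, Matrix.one_mulVec]
  rw [Amat_mulVec] at h1
  ext i j
  have := congrFun h1 (i, j)
  exact this

lemma unique_sol (A : Matrix (Fin n) (Fin n) ℝ) (N : Fin m → Matrix (Fin n) (Fin n) ℝ)
    (σ : ℝ) (hdet : IsUnit (Amat A N σ).det) (Y Z : Matrix (Fin n) (Fin n) ℝ)
    (hY : (2 - 2*σ) • Y - σ • Lop A N Y = (2 - 2*σ) • Z - σ • Lop A N Z) : Y = Z := by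
  have h1 : Amat A N σ *ᵥ vecm Y = Amat A N σ *ᵥ vecm Z := by
    rw [Amat_mulVec, Amat_mulVec, hY]
  have h2 : vecm Y = vecm Z := by
    have := congrArg (fun w => (Amat A N σ)⁻¹ *ᵥ w) h1
    simpa [Matrix.mulVec_mulVec, Matrix.nonsing_inv_mul _ hdet, Matrix.one_mulVec] using this
  ext i j
  exact congrFun h2 (i, j)

lemma Lop_transpose (A : Matrix (Fin n) (Fin n) ℝ) (N : Fin m → Matrix (Fin n) (Fin n) ℝ)
    (Y : Matrix (Fin n) (Fin n) ℝ) : (Lop A N Y)ᵀ = Lop A N Yᵀ := by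
  simp only [Lop, Matrix.transpose_add, Matrix.transpose_sum, Matrix.transpose_mul,
    Matrix.transpose_transpose, Matrix.mul_assoc]
  abel

lemma Xsol_symm (A : Matrix (Fin n) (Fin n) ℝ) (N : Fin m → Matrix (Fin n) (Fin n) ℝ)
    (C : Matrix (Fin n) (Fin n) ℝ) (hC : Cᵀ = C) (σ : ℝ)
    (hdet : IsUnit (Amat A N σ).det) : (Xsol A N C σ)ᵀ = Xsol A N C σ := by
  apply unique_sol A N σ hdet
  rw [← Lop_transpose, ← Matrix.transpose_smul, ← Matrix.transpose_smul, ← Matrix.transpose_sub,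
    Xsol_eq A N C σ hdet, hC]

lemma dotProduct_sum' {ι : Type*} [Fintype ι] (v : Fin n → ℝ) (f : ι → Fin n → ℝ) :
    v ⬝ᵥ (∑ k, f k) = ∑ k, v ⬝ᵥ f k := by
  simp only [dotProduct, Finset.sum_apply, Finset.mul_sum]
  exact Finset.sum_comm

lemma psd_kernel {M : Matrix (Fin n) (Fin n) ℝ} (hsym : Mᵀ = M) (hpsd : PSDm M)
    {w : Fin n → ℝ} (hw : w ⬝ᵥ M *ᵥ w = 0) : M *ᵥ w = 0 := by
  funext i
  have key : ∀ y : Fin n → ℝ, y ⬝ᵥ M *ᵥ w = 0 := by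
    intro y
    set c := y ⬝ᵥ M *ᵥ w with hc
    set d := y ⬝ᵥ M *ᵥ y with hd
    have hd0 : 0 ≤ d := hpsd y
    have key2 : ∀ t : ℝ, 0 ≤ 2*t*c + t^2*d := by
      intro t
      have h0 := hpsd (w + t • y)
      have hsymdot : w ⬝ᵥ M *ᵥ y = c := by
        rw [hc, Matrix.dotProduct_mulVec, ← Matrix.mulVec_transpose, hsym]
        exact dotProduct_comm _ _
      calc (0:ℝ) ≤ (w + t • y) ⬝ᵥ M *ᵥ (w + t • y) := h0
        _ = w ⬝ᵥ M *ᵥ w + t * (w ⬝ᵥ M *ᵥ y) + t * (y ⬝ᵥ M *ᵥ w) + t^2 * (y ⬝ᵥ M *ᵥ y) := by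
            rw [Matrix.mulVec_add, Matrix.mulVec_smul]
            simp only [add_dotProduct, smul_dotProduct, dotProduct_add,
              dotProduct_smul, smul_eq_mul]
            ring
        _ = 2*t*c + t^2*d := by rw [hw, hsymdot, ← hc, ← hd]; ring
    have hd1 : (0:ℝ) < d + 1 := by linarith
    have ht := key2 (-(c/(d+1)))
    have h4 : (2*(-(c/(d+1)))*c + (-(c/(d+1)))^2*d) * (d+1)^2 = -(c^2*(d+2)) := by
      field_simp
      ring
    have h3 : 0 ≤ (2*(-(c/(d+1)))*c + (-(c/(d+1)))^2*d) * (d+1)^2 :=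
      mul_nonneg ht (by positivity)
    rw [h4] at h3
    have hc2 : c^2 ≤ 0 := by nlinarith
    have : c^2 = 0 := le_antisymm hc2 (sq_nonneg c)
    exact pow_eq_zero_iff (by norm_num) |>.mp this
  have := key (Pi.single i 1)
  simpa using this

lemma psd_to_pd (A : Matrix (Fin n) (Fin n) ℝ) (N : Fin m → Matrix (Fin n) (Fin n) ℝ)
    (C : Matrix (Fin n) (Fin n) ℝ) (hC : PDm C) (σ : ℝ) (h0 : 0 ≤ σ)
    (X : Matrix (Fin n) (Fin n) ℝ) (hsym : Xᵀ = X)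
    (heq : (2 - 2*σ) • X - σ • Lop A N X = C) (hpsd : PSDm X) : PDm X := by
  intro w hw
  rcases lt_or_ge 0 (w ⬝ᵥ X *ᵥ w) with h | h
  · exact h
  have hzero : w ⬝ᵥ X *ᵥ w = 0 := le_antisymm h (hpsd w)
  have hker : X *ᵥ w = 0 := psd_kernel hsym hpsd hzero
  exfalso
  have hCw := hC w hw
  have h1 : w ⬝ᵥ (A * X) *ᵥ w = 0 := by
    rw [← Matrix.mulVec_mulVec, hker]
    simp
  have h2 : w ⬝ᵥ (X * Aᵀ) *ᵥ w = 0 := by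
    rw [← Matrix.mulVec_mulVec, Matrix.dotProduct_mulVec, ← Matrix.mulVec_transpose, hsym, hker]
    simp
  have h3 : ∀ k, w ⬝ᵥ (N k * X * (N k)ᵀ) *ᵥ w = ((N k)ᵀ *ᵥ w) ⬝ᵥ X *ᵥ ((N k)ᵀ *ᵥ w) := by
    intro k
    rw [← Matrix.mulVec_mulVec, ← Matrix.mulVec_mulVec, Matrix.dotProduct_mulVec (v := w),
      ← Matrix.mulVec_transpose]
  have hCval : w ⬝ᵥ C *ᵥ w = -(σ * ∑ k, ((N k)ᵀ *ᵥ w) ⬝ᵥ X *ᵥ ((N k)ᵀ *ᵥ w)) := by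
    rw [← heq]
    rw [Matrix.sub_mulVec, Matrix.smul_mulVec, Matrix.smul_mulVec]
    rw [dotProduct_sub, dotProduct_smul, dotProduct_smul]
    rw [hzero]
    have hsum : w ⬝ᵥ (Lop A N X) *ᵥ w = ∑ k, ((N k)ᵀ *ᵥ w) ⬝ᵥ X *ᵥ ((N k)ᵀ *ᵥ w) := by
      rw [Lop, Matrix.add_mulVec, Matrix.add_mulVec, sum_mulVec']
      rw [dotProduct_add, dotProduct_add, h1, h2,
        dotProduct_sum' w (fun k => (N k * X * (N k)ᵀ) *ᵥ w)]
      simp only [h3]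
      ring
    rw [hsum]
    simp
  have hsumnn : 0 ≤ ∑ k, ((N k)ᵀ *ᵥ w) ⬝ᵥ X *ᵥ ((N k)ᵀ *ᵥ w) :=
    Finset.sum_nonneg fun k _ => hpsd _
  nlinarith

lemma dot_self_pos {w : Fin n → ℝ} (hw : w ≠ 0) : 0 < w ⬝ᵥ w := by
  have hnn : 0 ≤ w ⬝ᵥ w := Finset.sum_nonneg fun i _ => mul_self_nonneg _
  rcases hnn.lt_or_eq with h | h
  · exact h
  exfalso
  apply hw
  funext i
  have h0 : ∀ j ∈ Finset.univ, 0 ≤ w j * w j := fun j _ => mul_self_nonneg _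
  have := (Finset.sum_eq_zero_iff_of_nonneg h0).mp h.symm i (Finset.mem_univ i)
  simp only [Pi.zero_apply]
  exact mul_self_eq_zero.mp this

lemma quad_bound {δ : ℝ} (hδ0 : 0 ≤ δ) (Δ : Matrix (Fin n) (Fin n) ℝ) (z : Fin n → ℝ)
    (hz : ∀ i, |z i| ≤ 1) (hΔ : ∀ i j, |Δ i j| ≤ δ) :
    |z ⬝ᵥ Δ *ᵥ z| ≤ (n:ℝ) * ((n:ℝ) * δ) := by
  calc |z ⬝ᵥ Δ *ᵥ z| ≤ ∑ i, |z i * (Δ *ᵥ z) i| := Finset.abs_sum_le_sum_abs _ _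
    _ ≤ ∑ _i : Fin n, (n:ℝ) * δ := by
        apply Finset.sum_le_sum
        intro i _
        rw [abs_mul]
        calc |z i| * |(Δ *ᵥ z) i| ≤ 1 * |(Δ *ᵥ z) i| :=
              mul_le_mul_of_nonneg_right (hz i) (abs_nonneg _)
          _ = |∑ j, Δ i j * z j| := by rw [one_mul]; rfl
          _ ≤ ∑ j, |Δ i j * z j| := Finset.abs_sum_le_sum_abs _ _
          _ ≤ ∑ _j : Fin n, δ := by
              apply Finset.sum_le_sum
              intro j _
              rw [abs_mul]
              calc |Δ i j| * |z j| ≤ δ * 1 :=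
                    mul_le_mul (hΔ i j) (hz j) (abs_nonneg _) hδ0
                _ = δ := mul_one δ
          _ = (n:ℝ) * δ := by simp
    _ = (n:ℝ) * ((n:ℝ) * δ) := by simp

lemma sphere_abs_le {w : Fin n → ℝ} (hw : w ⬝ᵥ w = 1) (i : Fin n) : |w i| ≤ 1 := by
  have h1 : w i * w i ≤ 1 := by
    rw [← hw]
    exact Finset.single_le_sum (f := fun j => w j * w j)
      (fun j _ => mul_self_nonneg _) (Finset.mem_univ i)
  nlinarith [abs_nonneg (w i), sq_abs (w i)]

lemma pd_isOpen : IsOpen {M : Matrix (Fin n) (Fin n) ℝ | PDm M} := by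
  rcases Nat.eq_zero_or_pos n with hn | hn
  · convert isOpen_univ
    ext M
    simp only [Set.mem_setOf_eq, Set.mem_univ, iff_true]
    intro w hw
    exfalso
    apply hw
    funext i
    exact absurd i.isLt (by omega)
  rw [isOpen_iff_mem_nhds]
  intro M0 hM0
  -- the unit sphere
  set S : Set (Fin n → ℝ) := {w | w ⬝ᵥ w = 1} with hS
  have hdotcont : Continuous fun w : Fin n → ℝ => w ⬝ᵥ w :=
    continuous_finset_sum _ fun i _ => (continuous_apply i).mul (continuous_apply i)
  have hSclosed : IsClosed S := isClosed_eq hdotcont continuous_const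
  have hSsub : S ⊆ Metric.closedBall 0 1 := by
    intro w hwS
    rw [Metric.mem_closedBall, dist_zero_right]
    rw [pi_norm_le_iff_of_nonneg (by norm_num)]
    intro i
    rw [Real.norm_eq_abs]
    exact sphere_abs_le hwS i
  have hScompact : IsCompact S :=
    (isCompact_closedBall (0 : Fin n → ℝ) 1).of_isClosed_subset hSclosed hSsub
  have hSne : S.Nonempty := by
    refine ⟨Pi.single ⟨0, hn⟩ 1, ?_⟩
    simp [hS, dotProduct, Pi.single_apply]
  have hqcont : Continuous fun w : Fin n → ℝ => w ⬝ᵥ M0 *ᵥ w := by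
    simp only [dotProduct, mulVec]
    exact continuous_finset_sum _ fun i _ => (continuous_apply i).mul
      (continuous_finset_sum _ fun j _ => continuous_const.mul (continuous_apply j))
  obtain ⟨w0, hw0S, hmin'⟩ := hScompact.exists_isMinOn hSne hqcont.continuousOn
  have hmin : ∀ z ∈ S, w0 ⬝ᵥ M0 *ᵥ w0 ≤ z ⬝ᵥ M0 *ᵥ z := fun z hzz => hmin' hzz
  have hw0ne : w0 ≠ 0 := by
    intro h
    rw [h] at hw0S
    simp [hS, dotProduct] at hw0S
  set μ := w0 ⬝ᵥ M0 *ᵥ w0 with hμ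
  have hμpos : 0 < μ := hM0 w0 hw0ne
  set δ := μ / ((n:ℝ) * (n:ℝ) + 1) with hδ
  have hδpos : 0 < δ := by
    apply div_pos hμpos
    positivity
  -- the eventual set
  have hev : ∀ᶠ M in nhds M0, ∀ ij : Fin n × Fin n, |M ij.1 ij.2 - M0 ij.1 ij.2| < δ := by
    rw [Filter.eventually_all]
    intro ij
    have hc : Continuous fun M : Matrix (Fin n) (Fin n) ℝ => M ij.1 ij.2 - M0 ij.1 ij.2 :=
      (continuous_id.matrix_elem ij.1 ij.2).sub continuous_const
    have : {y : ℝ | |y| < δ} ∈ nhds (M0 ij.1 ij.2 - M0 ij.1 ij.2) := by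
      simp only [sub_self]
      have := Metric.ball_mem_nhds (0:ℝ) hδpos
      simpa [Real.ball_eq_Ioo, Set.mem_setOf_eq, abs_lt, Set.Ioo] using this
    exact hc.continuousAt.preimage_mem_nhds this
  apply Filter.mem_of_superset hev
  intro M hM
  intro w hw
  -- normalize
  have hwdot : 0 < w ⬝ᵥ w := dot_self_pos hw
  set s := Real.sqrt (w ⬝ᵥ w) with hs
  have hspos : 0 < s := Real.sqrt_pos.mpr hwdot
  set z := s⁻¹ • w with hz
  have hzS : z ⬝ᵥ z = 1 := by
    rw [hz, smul_dotProduct, dotProduct_smul]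
    simp only [smul_eq_mul]
    rw [← mul_assoc]
    have hss : s * s = w ⬝ᵥ w := Real.mul_self_sqrt hwdot.le
    rw [← hss]
    field_simp
  have hwz : w = s • z := by
    rw [hz, smul_smul]
    field_simp
    rw [one_smul]
  have hkey : 0 < z ⬝ᵥ M *ᵥ z := by
    have hsplit : z ⬝ᵥ M *ᵥ z = z ⬝ᵥ M0 *ᵥ z + z ⬝ᵥ (M - M0) *ᵥ z := by
      rw [Matrix.sub_mulVec, dotProduct_sub]
      ring
    have h1 : μ ≤ z ⬝ᵥ M0 *ᵥ z := hmin z hzS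
    have h2 : |z ⬝ᵥ (M - M0) *ᵥ z| ≤ (n:ℝ) * ((n:ℝ) * δ) :=
      quad_bound hδpos.le _ _ (sphere_abs_le hzS) (fun i j => (le_of_lt (hM (i, j))))
    have h3 : (n:ℝ) * ((n:ℝ) * δ) < μ := by
      have hpos : (0:ℝ) < (n:ℝ)*(n:ℝ)+1 := by positivity
      rw [hδ]
      rw [show (n:ℝ) * ((n:ℝ) * (μ / ((n:ℝ)*(n:ℝ)+1))) = (μ * ((n:ℝ)*(n:ℝ))) / ((n:ℝ)*(n:ℝ)+1)
        from by ring]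
      rw [div_lt_iff₀ hpos]
      nlinarith [hμpos]
    have := abs_le.mp h2
    linarith
  rw [hwz, Matrix.mulVec_smul, smul_dotProduct, dotProduct_smul]
  simp only [smul_eq_mul]
  positivity

lemma Xsol_contOn (A : Matrix (Fin n) (Fin n) ℝ) (N : Fin m → Matrix (Fin n) (Fin n) ℝ)
    (C : Matrix (Fin n) (Fin n) ℝ)
    (hdet : ∀ σ ∈ Set.Icc (0:ℝ) 1, IsUnit (Amat A N σ).det) :
    ContinuousOn (fun σ => Xsol A N C σ) (Set.Icc (0:ℝ) 1) := by
  have hAc : Continuous fun σ => Amat A N σ := by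
    apply continuous_matrix
    intro p q
    have : (fun σ => Amat A N σ p q)
        = fun σ => (2 - 2*σ) * (1 : Matrix (Fin n × Fin n) (Fin n × Fin n) ℝ) p q
          - σ * Kmat A N p q := by
      funext σ
      simp [Amat, Matrix.sub_apply, Matrix.smul_apply, smul_eq_mul]
      ring
    rw [this]
    fun_prop
  have hdetc : Continuous fun σ => (Amat A N σ).det := hAc.matrix_det
  have hadjc : Continuous fun σ => (Amat A N σ).adjugate := hAc.matrix_adjugate
  have hdetinv : ContinuousOn (fun σ => ((Amat A N σ).det)⁻¹) (Set.Icc (0:ℝ) 1) :=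
    ContinuousOn.inv₀ hdetc.continuousOn fun σ hσ => (hdet σ hσ).ne_zero
  intro σ0 hσ0
  apply continuousWithinAt_pi.mpr
  intro i
  apply continuousWithinAt_pi.mpr
  intro j
  have hXentry : (fun σ => Xsol A N C σ i j)
      = fun σ => ((Amat A N σ).det)⁻¹ * (((Amat A N σ).adjugate *ᵥ vecm C) (i, j)) := by
    funext σ
    show (((Amat A N σ)⁻¹) *ᵥ vecm C) (i, j) = _
    rw [Matrix.inv_def, Ring.inverse_eq_inv', Matrix.smul_mulVec]
    rfl
  show ContinuousWithinAt (fun σ => Xsol A N C σ i j) _ _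
  rw [hXentry]
  apply ContinuousWithinAt.mul (hdetinv σ0 hσ0)
  have : Continuous fun σ => ((Amat A N σ).adjugate *ᵥ vecm C) (i, j) := by
    simp only [mulVec, dotProduct]
    apply continuous_finset_sum
    intro q _
    exact (((continuous_apply q).comp ((continuous_apply (i,j)).comp hadjc))).mul
      continuous_const
  exact this.continuousWithinAt

lemma Xsol_one_pd (A : Matrix (Fin n) (Fin n) ℝ) (N : Fin m → Matrix (Fin n) (Fin n) ℝ)
    (hstab : ∀ z ∈ spectrum ℂ ((Kmat A N).map Complex.ofReal), z.re < 0)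
    (C : Matrix (Fin n) (Fin n) ℝ) (hCsym : Cᵀ = C) (hC : PDm C) :
    ∀ σ ∈ Set.Icc (0:ℝ) 1, PDm (Xsol A N C σ) := by
  have hdet : ∀ σ ∈ Set.Icc (0:ℝ) 1, IsUnit (Amat A N σ).det :=
    fun σ hσ => Amat_det_ne A N hstab σ hσ.1 hσ.2
  have hsym : ∀ σ ∈ Set.Icc (0:ℝ) 1, (Xsol A N C σ)ᵀ = Xsol A N C σ :=
    fun σ hσ => Xsol_symm A N C hCsym σ (hdet σ hσ)
  have hcont := Xsol_contOn A N C hdet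
  -- PD at 0
  have hpd0 : PDm (Xsol A N C 0) := by
    have h0 := Xsol_eq A N C 0 (hdet 0 (by norm_num))
    simp only [mul_zero, sub_zero, zero_smul] at h0
    intro w hw
    have := hC w hw
    have heq : w ⬝ᵥ ((2:ℝ) • Xsol A N C 0) *ᵥ w = w ⬝ᵥ C *ᵥ w := by rw [h0]
    rw [Matrix.smul_mulVec, dotProduct_smul, smul_eq_mul] at heq
    linarith
  by_contra hbad
  push_neg at hbad
  obtain ⟨σb, hσb, hσbnpd⟩ := hbad
  set T : Set ℝ := {σ | σ ∈ Set.Icc (0:ℝ) 1 ∧ ¬ PDm (Xsol A N C σ)} with hT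
  have hTne : T.Nonempty := ⟨σb, hσb, hσbnpd⟩
  have hTbdd : BddBelow T := ⟨0, fun σ hσ => hσ.1.1⟩
  set τ := sInf T with hτ
  have hτ0 : 0 ≤ τ := le_csInf hTne fun σ hσ => hσ.1.1
  have hτ1 : τ ≤ 1 := le_trans (csInf_le hTbdd hTne.choose_spec |>.trans_eq rfl) (by
    exact hTne.choose_spec.1.2) |>.trans_eq rfl
  have hτmem : τ ∈ Set.Icc (0:ℝ) 1 := ⟨hτ0, hτ1⟩
  have hbelow : ∀ σ, 0 ≤ σ → σ < τ → PDm (Xsol A N C σ) := by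
    intro σ h0σ hστ
    by_contra hn
    have : σ ∈ T := ⟨⟨h0σ, le_trans hστ.le hτ1⟩, hn⟩
    exact absurd (csInf_le hTbdd this) (not_le.mpr hστ)
  have hτpsd : PSDm (Xsol A N C τ) := by
    rcases eq_or_lt_of_le hτ0 with h0 | h0
    · rw [← h0]
      exact hpd0.psd
    · intro w
      have hneBot : (nhdsWithin τ (Set.Ioo 0 τ)).NeBot := by
        rw [← mem_closure_iff_nhdsWithin_neBot, closure_Ioo (ne_of_lt h0)]
        exact ⟨h0.le, le_refl τ⟩
      have htend : Filter.Tendsto (fun σ => w ⬝ᵥ (Xsol A N C σ) *ᵥ w)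
          (nhdsWithin τ (Set.Ioo 0 τ)) (nhds (w ⬝ᵥ (Xsol A N C τ) *ᵥ w)) := by
        have hq : Continuous fun M : Matrix (Fin n) (Fin n) ℝ => w ⬝ᵥ M *ᵥ w := by
          simp only [dotProduct, mulVec]
          exact continuous_finset_sum _ fun i _ => continuous_const.mul
            (continuous_finset_sum _ fun j _ =>
              (continuous_id.matrix_elem i j).mul continuous_const)
        have h1 : ContinuousWithinAt (fun σ => Xsol A N C σ) (Set.Ioo 0 τ) τ :=
          (hcont τ hτmem).mono (fun σ hσ => ⟨hσ.1.le, le_trans hσ.2.le hτ1⟩)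
        exact (hq.continuousAt.tendsto).comp h1
      apply ge_of_tendsto htend
      filter_upwards [eventually_mem_nhdsWithin] with σ hσ
      exact ((hbelow σ hσ.1.le hσ.2).psd) w
  have hτpd : PDm (Xsol A N C τ) :=
    psd_to_pd A N C hC τ hτ0 _ (hsym τ hτmem) (Xsol_eq A N C τ (hdet τ hτmem)) hτpsd
  -- contradiction with τ ∈ closure T
  have hτclos : τ ∈ closure T := csInf_mem_closure hTne hTbdd
  have hneBotT : (nhdsWithin τ T).NeBot := mem_closure_iff_nhdsWithin_neBot.mp hτclos
  have hev : ∀ᶠ σ in nhdsWithin τ (Set.Icc (0:ℝ) 1), PDm (Xsol A N C σ) :=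
    (hcont τ hτmem).eventually (pd_isOpen.eventually_mem hτpd)
  have hev2 : ∀ᶠ σ in nhdsWithin τ T, PDm (Xsol A N C σ) :=
    hev.filter_mono (nhdsWithin_mono τ fun σ hσ => hσ.1)
  obtain ⟨σ, hσpd, hσT⟩ := (hev2.and eventually_mem_nhdsWithin).exists
  exact hσT.2 hσpd

lemma dotT {k l : ℕ} (M : Matrix (Fin k) (Fin l) ℝ) (a : Fin k → ℝ) (b : Fin l → ℝ) :
    a ⬝ᵥ (M *ᵥ b) = (Mᵀ *ᵥ a) ⬝ᵥ b := by
  rw [Matrix.dotProduct_mulVec, ← Matrix.mulVec_transpose]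

lemma dot_self_nonneg' {k : ℕ} (z : Fin k → ℝ) : 0 ≤ z ⬝ᵥ z :=
  Finset.sum_nonneg fun i _ => mul_self_nonneg _

section Energy

variable {n m : ℕ}

lemma energy_estimate
    (A : Matrix (Fin n) (Fin n) ℝ) (N : Fin m → Matrix (Fin n) (Fin n) ℝ)
    (B : Matrix (Fin n) (Fin m) ℝ)
    (u : ℝ → Fin m → ℝ) (hu : Continuous u)
    (huL2 : IntegrableOn (fun s => ∑ k, (u s k) ^ 2) (Set.Ioi (0:ℝ)))
    (u0 : ℝ → Fin m → ℝ) (hu0 : ∀ t k, u0 t k = if N k = 0 then 0 else u t k)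
    (x : ℝ → Fin n → ℝ) (hx0 : x 0 = 0)
    (hx : ∀ t : ℝ, 0 ≤ t → ∀ i, HasDerivAt (fun τ => x τ i)
      ((A.mulVec (x t) + B.mulVec (u t) + ∑ k, u t k • (N k).mulVec (x t)) i) t)
    (ε : ℝ) (hε : 0 < ε)
    (P' : Matrix (Fin n) (Fin n) ℝ) (hsym' : P'ᵀ = P') (hpd' : PDm P')
    (hLyap : A * P' + P' * Aᵀ + (∑ k, N k * P' * (N k)ᵀ)
      = -(B * Bᵀ + ε • (1 : Matrix (Fin n) (Fin n) ℝ))) :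
    ∀ t : ℝ, 0 ≤ t → ∀ vv : Fin n → ℝ,
      (x t ⬝ᵥ vv)^2 ≤ (vv ⬝ᵥ P' *ᵥ vv) *
        (Real.exp (∫ s in Set.Ioi (0:ℝ), ∑ k, (u0 s k) ^ 2)
          * ∫ s in Set.Ioi (0:ℝ), ∑ k, (u s k) ^ 2) := by
  -- notation
  set gf : ℝ → ℝ := fun s => ∑ k, (u0 s k) ^ 2 with hgf
  set hf : ℝ → ℝ := fun s => ∑ k, (u s k) ^ 2 with hhf
  have hgf_eq : ∀ s, gf s = ∑ k, (if N k = 0 then 0 else (u s k)^2) := by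
    intro s
    apply Finset.sum_congr rfl
    intro k _
    rw [hu0]
    split <;> simp
  have hhc : Continuous hf :=
    continuous_finset_sum _ fun k _ => ((continuous_apply k).comp hu).pow 2
  have hgc : Continuous gf := by
    have : gf = fun s => ∑ k, (if N k = 0 then 0 else (u s k)^2) := funext hgf_eq
    rw [this]
    apply continuous_finset_sum
    intro k _
    split
    · exact continuous_const
    · exact ((continuous_apply k).comp hu).pow 2
  have hgnn : ∀ s, 0 ≤ gf s := fun s => Finset.sum_nonneg fun k _ => sq_nonneg _
  have hhnn : ∀ s, 0 ≤ hf s := fun s => Finset.sum_nonneg fun k _ => sq_nonneg _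
  have hgh : ∀ s, gf s ≤ hf s := by
    intro s
    rw [hgf_eq]
    apply Finset.sum_le_sum
    intro k _
    split
    · exact sq_nonneg _
    · exact le_refl _
  have hgint : IntegrableOn gf (Set.Ioi (0:ℝ)) := by
    apply MeasureTheory.Integrable.mono huL2 hgc.aestronglyMeasurable.restrict
    filter_upwards with s
    rw [Real.norm_eq_abs, Real.norm_eq_abs, abs_of_nonneg (hgnn s), abs_of_nonneg (hhnn s)]
    exact hgh s
  -- matrix facts
  have hdet' : IsUnit P'.det := by
    rw [isUnit_iff_ne_zero]
    intro h
    obtain ⟨w, hw, hw0⟩ := (Matrix.exists_mulVec_eq_zero_iff).mpr h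
    have := hpd' w hw
    rw [hw0] at this
    simp at this
  set Q : Matrix (Fin n) (Fin n) ℝ := P'⁻¹ with hQ
  have hQsym : Qᵀ = Q := by
    rw [hQ, Matrix.transpose_nonsing_inv, hsym']
  have hPQ : P' * Q = 1 := Matrix.mul_nonsing_inv _ hdet'
  have hQP : Q * P' = 1 := Matrix.nonsing_inv_mul _ hdet'
  have hQPv : ∀ w : Fin n → ℝ, P' *ᵥ (Q *ᵥ w) = w := by
    intro w
    rw [Matrix.mulVec_mulVec, hPQ, Matrix.one_mulVec]
  have hQPv' : ∀ w : Fin n → ℝ, Q *ᵥ (P' *ᵥ w) = w := by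
    intro w
    rw [Matrix.mulVec_mulVec, hQP, Matrix.one_mulVec]
  have hQpsd : PSDm Q := by
    intro w
    have : w ⬝ᵥ Q *ᵥ w = (Q *ᵥ w) ⬝ᵥ P' *ᵥ (Q *ᵥ w) := by
      rw [hQPv w]
      exact dotProduct_comm _ _
    rw [this]
    exact hpd'.psd _
  -- the energy function
  set W : ℝ → ℝ := fun τ => x τ ⬝ᵥ Q *ᵥ x τ with hW
  set xd : ℝ → Fin n → ℝ :=
    fun t => A *ᵥ (x t) + B *ᵥ (u t) + ∑ k, u t k • (N k) *ᵥ (x t) with hxd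
  have hWd : ∀ t, 0 ≤ t → HasDerivAt W (2 * ((Q *ᵥ x t) ⬝ᵥ xd t)) t := by
    intro t ht
    have h1 : HasDerivAt (fun τ => ∑ i, x τ i * ∑ j, Q i j * x τ j)
        (∑ i, (xd t i * ∑ j, Q i j * x t j + x t i * ∑ j, Q i j * xd t j)) t := by
      apply HasDerivAt.fun_sum
      intro i _
      exact (hx t ht i).mul (HasDerivAt.fun_sum fun j _ => (hx t ht j).const_mul _)
    have h2 : W = fun τ => ∑ i, x τ i * ∑ j, Q i j * x τ j := rfl
    have h3 : (∑ i, (xd t i * ∑ j, Q i j * x t j + x t i * ∑ j, Q i j * xd t j))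
        = 2 * ((Q *ᵥ x t) ⬝ᵥ xd t) := by
      have e1 : (∑ i, xd t i * ∑ j, Q i j * x t j) = xd t ⬝ᵥ Q *ᵥ x t := rfl
      have e2 : (∑ i, x t i * ∑ j, Q i j * xd t j) = x t ⬝ᵥ Q *ᵥ xd t := rfl
      rw [Finset.sum_add_distrib, e1, e2, dotT Q (x t) (xd t), hQsym]
      rw [dotProduct_comm (xd t)]
      ring
    rw [h2, ← h3]
    exact h1
  have hKey : ∀ t, 0 ≤ t → 2 * ((Q *ᵥ x t) ⬝ᵥ xd t) ≤ hf t + gf t * W t := by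
    intro t ht
    set y := x t with hy
    set r := Q *ᵥ y with hr
    set b := Bᵀ *ᵥ r with hb
    have hyPr : P' *ᵥ r = y := hQPv y
    -- expand the dot product
    have hexp : (r ⬝ᵥ xd t) = r ⬝ᵥ (A *ᵥ y) + b ⬝ᵥ (u t)
        + ∑ k, u t k * (((N k)ᵀ *ᵥ r) ⬝ᵥ y) := by
      rw [hxd]
      rw [dotProduct_add, dotProduct_add]
      congr 1
      · congr 1
        rw [hb, ← dotT]
      · rw [dotProduct_sum' r]
        apply Finset.sum_congr rfl
        intro k _
        rw [dotProduct_smul, smul_eq_mul, dotT]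
    -- the quadratic identity for the A-part
    have hApart : 2 * (r ⬝ᵥ (A *ᵥ y)) = -(b ⬝ᵥ b) - ε * (r ⬝ᵥ r)
        - ∑ k, (((N k)ᵀ *ᵥ r) ⬝ᵥ (P' *ᵥ ((N k)ᵀ *ᵥ r))) := by
      have h1 : r ⬝ᵥ (A *ᵥ y) = r ⬝ᵥ ((A * P') *ᵥ r) := by
        rw [← hyPr, Matrix.mulVec_mulVec]
      have h2 : r ⬝ᵥ ((P' * Aᵀ) *ᵥ r) = r ⬝ᵥ ((A * P') *ᵥ r) := by
        rw [dotT]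
        rw [Matrix.transpose_mul, Matrix.transpose_transpose, hsym']
        exact dotProduct_comm _ _
      have h3 : 2 * (r ⬝ᵥ (A *ᵥ y)) = r ⬝ᵥ ((A * P' + P' * Aᵀ) *ᵥ r) := by
        rw [Matrix.add_mulVec, dotProduct_add, h1, h2]
        ring
      have h4 : A * P' + P' * Aᵀ
          = -(B * Bᵀ + ε • (1 : Matrix (Fin n) (Fin n) ℝ)) - ∑ k, N k * P' * (N k)ᵀ := by
        rw [← hLyap]
        abel
      rw [h3, h4]
      rw [Matrix.sub_mulVec, dotProduct_sub, Matrix.neg_mulVec,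
        dotProduct_neg, Matrix.add_mulVec, dotProduct_add,
        Matrix.smul_mulVec, dotProduct_smul, Matrix.one_mulVec,
        sum_mulVec', dotProduct_sum' r]
      have h5 : r ⬝ᵥ ((B * Bᵀ) *ᵥ r) = b ⬝ᵥ b := by
        rw [← Matrix.mulVec_mulVec, dotT, hb]
      have h6 : ∀ k, r ⬝ᵥ ((N k * P' * (N k)ᵀ) *ᵥ r)
          = ((N k)ᵀ *ᵥ r) ⬝ᵥ (P' *ᵥ ((N k)ᵀ *ᵥ r)) := by
        intro k
        rw [← Matrix.mulVec_mulVec, ← Matrix.mulVec_mulVec, dotT]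
      rw [h5]
      rw [Finset.sum_congr rfl (fun k _ => h6 k)]
      simp only [smul_eq_mul]
      ring
    -- bound the B-part
    have hBpart : -(b ⬝ᵥ b) + 2 * (b ⬝ᵥ u t) ≤ hf t := by
      have h0 := dot_self_nonneg' (u t - b)
      have hexp2 : (u t - b) ⬝ᵥ (u t - b)
          = u t ⬝ᵥ u t - 2 * (b ⬝ᵥ u t) + b ⬝ᵥ b := by
        rw [sub_dotProduct, dotProduct_sub, dotProduct_sub]
        rw [dotProduct_comm (u t) b]
        ring
      have huu : u t ⬝ᵥ u t = hf t := by
        rw [hhf]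
        apply Finset.sum_congr rfl
        intro k _
        rw [pow_two]
      nlinarith [h0, hexp2, huu]
    -- bound the N-parts
    have hNpart : ∀ k, -(((N k)ᵀ *ᵥ r) ⬝ᵥ (P' *ᵥ ((N k)ᵀ *ᵥ r)))
        + 2 * (u t k * (((N k)ᵀ *ᵥ r) ⬝ᵥ y)) ≤ (u0 t k)^2 * W t := by
      intro k
      by_cases hNk : N k = 0
      · rw [hu0, if_pos hNk, hNk]
        simp [Matrix.transpose_zero, Matrix.zero_mulVec]
      · rw [hu0, if_neg hNk]
        set a := (N k)ᵀ *ᵥ r with ha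
        set c := u t k with hc
        have h0 := hpd'.psd (a - c • r)
        have he1 : a ⬝ᵥ (P' *ᵥ r) = a ⬝ᵥ y := by rw [hyPr]
        have he2 : r ⬝ᵥ (P' *ᵥ a) = a ⬝ᵥ y := by
          rw [dotT, hsym', hyPr]
          exact dotProduct_comm _ _
        have he3 : r ⬝ᵥ (P' *ᵥ r) = W t := by
          rw [hyPr, hW]
          exact dotProduct_comm _ _
        have hexp3 : (a - c • r) ⬝ᵥ (P' *ᵥ (a - c • r))
            = a ⬝ᵥ (P' *ᵥ a) - 2 * c * (a ⬝ᵥ y) + c^2 * W t := by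
          rw [Matrix.mulVec_sub, Matrix.mulVec_smul]
          rw [sub_dotProduct, dotProduct_sub, dotProduct_sub,
            smul_dotProduct, dotProduct_smul, dotProduct_smul,
            smul_dotProduct]
          simp only [smul_eq_mul]
          rw [he1, he2, he3]
          ring
        nlinarith [h0, hexp3]
    -- combine
    rw [hexp]
    have hsum : ∑ k, (u0 t k)^2 * W t = gf t * W t := by
      rw [hgf, ← Finset.sum_mul]
    calc 2 * (r ⬝ᵥ (A *ᵥ y) + b ⬝ᵥ (u t) + ∑ k, u t k * (((N k)ᵀ *ᵥ r) ⬝ᵥ y))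
        = (-(b ⬝ᵥ b) + 2 * (b ⬝ᵥ u t)) + (- (ε * (r ⬝ᵥ r)))
          + ∑ k, (-(((N k)ᵀ *ᵥ r) ⬝ᵥ (P' *ᵥ ((N k)ᵀ *ᵥ r)))
            + 2 * (u t k * (((N k)ᵀ *ᵥ r) ⬝ᵥ y))) := by
          rw [Finset.sum_add_distrib]
          simp only [Finset.sum_neg_distrib]
          rw [← Finset.mul_sum]
          linarith [hApart]
      _ ≤ hf t + 0 + ∑ k, (u0 t k)^2 * W t := by
          apply add_le_add
          apply add_le_add hBpart
          · simp only [neg_nonpos]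
            exact mul_nonneg hε.le (dot_self_nonneg' r)
          · exact Finset.sum_le_sum fun k _ => hNpart k
      _ = hf t + gf t * W t := by rw [hsum]; ring
  -- Gronwall
  set G : ℝ → ℝ := fun τ => ∫ s in (0:ℝ)..τ, gf s with hGdef
  set H : ℝ → ℝ := fun τ => ∫ s in (0:ℝ)..τ, hf s with hHdef
  have hGd : ∀ τ : ℝ, HasDerivAt G (gf τ) τ := fun τ =>
    intervalIntegral.integral_hasDerivAt_right (hgc.intervalIntegrable _ _)
      (hgc.stronglyMeasurableAtFilter _ _) hgc.continuousAt
  have hHd : ∀ τ : ℝ, HasDerivAt H (hf τ) τ := fun τ =>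
    intervalIntegral.integral_hasDerivAt_right (hhc.intervalIntegrable _ _)
      (hhc.stronglyMeasurableAtFilter _ _) hhc.continuousAt
  have hGnn : ∀ τ : ℝ, 0 ≤ τ → 0 ≤ G τ := fun τ hτ =>
    intervalIntegral.integral_nonneg hτ (fun s _ => hgnn s)
  set Φ : ℝ → ℝ := fun τ => H τ - Real.exp (-(G τ)) * W τ with hΦdef
  have hΦd : ∀ τ : ℝ, 0 ≤ τ → HasDerivAt Φ
      (hf τ - (Real.exp (-(G τ)) * -(gf τ) * W τ
        + Real.exp (-(G τ)) * (2 * ((Q *ᵥ x τ) ⬝ᵥ xd τ)))) τ := by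
    intro τ hτ
    exact (hHd τ).sub ((((hGd τ).neg).exp).mul (hWd τ hτ))
  have hΦmono : MonotoneOn Φ (Set.Ici (0:ℝ)) := by
    apply monotoneOn_of_deriv_nonneg (convex_Ici 0)
    · intro τ hτ
      exact ((hΦd τ hτ).continuousAt).continuousWithinAt
    · intro τ hτ
      rw [interior_Ici] at hτ
      exact ((hΦd τ (le_of_lt hτ)).differentiableAt).differentiableWithinAt
    · intro τ hτ
      rw [interior_Ici] at hτ
      rw [(hΦd τ (le_of_lt hτ)).deriv]
      have hexp1 : Real.exp (-(G τ)) ≤ 1 := by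
        rw [Real.exp_le_one_iff]
        simp [hGnn τ (le_of_lt hτ)]
      have h2 : 2 * ((Q *ᵥ x τ) ⬝ᵥ xd τ) - gf τ * W τ ≤ hf τ := by
        have := hKey τ (le_of_lt hτ)
        linarith
      have h3 : Real.exp (-(G τ)) * (2 * ((Q *ᵥ x τ) ⬝ᵥ xd τ) - gf τ * W τ)
          ≤ Real.exp (-(G τ)) * hf τ :=
        mul_le_mul_of_nonneg_left h2 (Real.exp_nonneg _)
      have h4 : Real.exp (-(G τ)) * hf τ ≤ 1 * hf τ :=
        mul_le_mul_of_nonneg_right hexp1 (hhnn τ)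
      nlinarith [h3, h4]
  have hW0 : W 0 = 0 := by
    rw [hW]
    simp [hx0]
  have hΦ0 : Φ 0 = 0 := by
    rw [hΦdef]
    simp only [hGdef, hHdef, intervalIntegral.integral_same, hW0]
    simp
  have hWle : ∀ t : ℝ, 0 ≤ t → W t ≤ Real.exp (G t) * H t := by
    intro t ht
    have := hΦmono (Set.self_mem_Ici) (Set.mem_Ici.mpr ht) ht
    rw [hΦ0, hΦdef] at this
    simp only at this
    have h5 : Real.exp (-(G t)) * W t ≤ H t := by linarith
    have h6 := mul_le_mul_of_nonneg_left h5 (Real.exp_nonneg (G t))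
    rw [← mul_assoc, ← Real.exp_add] at h6
    simpa using h6
  -- bound by the full integrals
  set Ginf : ℝ := ∫ s in Set.Ioi (0:ℝ), gf s with hGinf
  set Hinf : ℝ := ∫ s in Set.Ioi (0:ℝ), hf s with hHinf
  have hHnn : ∀ τ : ℝ, 0 ≤ τ → 0 ≤ H τ := fun τ hτ =>
    intervalIntegral.integral_nonneg hτ (fun s _ => hhnn s)
  have hGle : ∀ t : ℝ, 0 ≤ t → G t ≤ Ginf := by
    intro t ht
    rw [hGdef]
    simp only
    rw [intervalIntegral.integral_of_le ht]
    exact setIntegral_mono_set hgint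
      (Filter.Eventually.of_forall fun s => hgnn s)
      (HasSubset.Subset.eventuallyLE Set.Ioc_subset_Ioi_self)
  have hHle : ∀ t : ℝ, 0 ≤ t → H t ≤ Hinf := by
    intro t ht
    rw [hHdef]
    simp only
    rw [intervalIntegral.integral_of_le ht]
    exact setIntegral_mono_set huL2
      (Filter.Eventually.of_forall fun s => hhnn s)
      (HasSubset.Subset.eventuallyLE Set.Ioc_subset_Ioi_self)
  have hWle2 : ∀ t : ℝ, 0 ≤ t → W t ≤ Real.exp Ginf * Hinf := by
    intro t ht
    calc W t ≤ Real.exp (G t) * H t := hWle t ht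
      _ ≤ Real.exp Ginf * Hinf := by
          apply mul_le_mul (Real.exp_le_exp.mpr (hGle t ht)) (hHle t ht)
            (hHnn t ht) (Real.exp_nonneg _)
  -- final Cauchy-Schwarz
  intro t ht vv
  by_cases hvv : vv = 0
  · rw [hvv]
    simp only [dotProduct_zero, Matrix.mulVec_zero, zero_dotProduct]
    rw [zero_pow (by norm_num)]
    simp
  · set q := x t ⬝ᵥ vv with hq
    set d := vv ⬝ᵥ P' *ᵥ vv with hd
    have hdpos : 0 < d := hpd' vv hvv
    set sc := q / d with hsc
    have h0 := hQpsd (x t - sc • (P' *ᵥ vv))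
    have he1 : x t ⬝ᵥ (Q *ᵥ (P' *ᵥ vv)) = q := by rw [hQPv' vv]
    have he2 : (P' *ᵥ vv) ⬝ᵥ (Q *ᵥ x t) = q := by
      rw [dotT, hQsym, hQPv' vv]
      rw [hq]
      exact dotProduct_comm _ _
    have he3 : (P' *ᵥ vv) ⬝ᵥ (Q *ᵥ (P' *ᵥ vv)) = d := by
      rw [dotT, hQsym, hQPv' vv]
    have hexp4 : (x t - sc • (P' *ᵥ vv)) ⬝ᵥ (Q *ᵥ (x t - sc • (P' *ᵥ vv)))
        = W t - 2 * sc * q + sc^2 * d := by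
      rw [Matrix.mulVec_sub, Matrix.mulVec_smul]
      rw [sub_dotProduct, dotProduct_sub, dotProduct_sub,
        smul_dotProduct, dotProduct_smul, dotProduct_smul,
        smul_dotProduct]
      simp only [smul_eq_mul]
      rw [he1, he2, he3]
      rw [hW]
      ring
    have hq2 : q^2 ≤ W t * d := by
      rw [hexp4] at h0
      have hsc2 : sc * d = q := by
        rw [hsc]
        field_simp
      nlinarith [h0, hsc2]
    calc q^2 ≤ W t * d := hq2
      _ ≤ (Real.exp Ginf * Hinf) * d :=
          mul_le_mul_of_nonneg_right (hWle2 t ht) hdpos.le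
      _ = d * (Real.exp Ginf * Hinf) := by ring

end Energy

lemma Lop_add_smul (A : Matrix (Fin n) (Fin n) ℝ) (N : Fin m → Matrix (Fin n) (Fin n) ℝ)
    (X Y : Matrix (Fin n) (Fin n) ℝ) (c : ℝ) :
    Lop A N (X + c • Y) = Lop A N X + c • Lop A N Y := by
  simp only [Lop, Matrix.mul_add, Matrix.add_mul, Matrix.mul_smul, Matrix.smul_mul,
    smul_add, Finset.smul_sum]
  rw [Finset.sum_add_distrib]
  abel

theorem reachability_estimate'
    {n m : ℕ}
    (A : Matrix (Fin n) (Fin n) ℝ) (N : Fin m → Matrix (Fin n) (Fin n) ℝ)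
    (B : Matrix (Fin n) (Fin m) ℝ)
    (u : ℝ → Fin m → ℝ) (hu : Continuous u)
    (huL2 : IntegrableOn (fun s => ∑ k, (u s k) ^ 2) (Set.Ioi (0:ℝ)))
    (u0 : ℝ → Fin m → ℝ) (hu0 : ∀ t k, u0 t k = if N k = 0 then 0 else u t k)
    (x : ℝ → Fin n → ℝ) (hx0 : x 0 = 0)
    (hx : ∀ t : ℝ, 0 ≤ t → ∀ i, HasDerivAt (fun τ => x τ i)
      ((A.mulVec (x t) + B.mulVec (u t) + ∑ k, u t k • (N k).mulVec (x t)) i) t)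
    (hstab : ∀ z ∈ spectrum ℂ ((A ⊗ₖ (1 : Matrix (Fin n) (Fin n) ℝ)
        + (1 : Matrix (Fin n) (Fin n) ℝ) ⊗ₖ A + ∑ k, N k ⊗ₖ N k).map Complex.ofReal),
        z.re < 0)
    (P : Matrix (Fin n) (Fin n) ℝ)
    (hP : A * P + P * Aᵀ + (∑ k, N k * P * (N k)ᵀ) = -(B * Bᵀ))
    (v : Fin n → Fin n → ℝ) (lam : Fin n → ℝ)
    (horth : ∀ i j, v i ⬝ᵥ v j = if i = j then (1:ℝ) else 0)
    (heig : ∀ i, P.mulVec (v i) = lam i • v i) :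
    ∀ i : Fin n, ∀ t : ℝ, 0 ≤ t →
      |x t ⬝ᵥ v i|
        ≤ Real.sqrt (lam i)
          * Real.exp (0.5 * ∫ s in Set.Ioi (0:ℝ), ∑ k, (u0 s k) ^ 2)
          * Real.sqrt (∫ s in Set.Ioi (0:ℝ), ∑ k, (u s k) ^ 2) := by
  intro i t ht
  have hstab' : ∀ z ∈ spectrum ℂ ((Kmat A N).map Complex.ofReal), z.re < 0 := hstab
  have hdet1 : IsUnit (Amat A N 1).det := Amat_det_ne A N hstab' 1 (by norm_num) (by norm_num)
  set R := Xsol A N (1 : Matrix (Fin n) (Fin n) ℝ) 1 with hRdef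
  have hReq : Lop A N R = -(1 : Matrix (Fin n) (Fin n) ℝ) := by
    have h := Xsol_eq A N (1 : Matrix (Fin n) (Fin n) ℝ) 1 hdet1
    have h2 : (2 - 2*(1:ℝ)) = 0 := by norm_num
    rw [h2, zero_smul, one_smul, zero_sub] at h
    exact neg_eq_iff_eq_neg.mp h
  have hRsym : Rᵀ = R := Xsol_symm A N 1 Matrix.transpose_one 1 hdet1
  set q := x t ⬝ᵥ v i with hq
  set Ginf : ℝ := ∫ s in Set.Ioi (0:ℝ), ∑ k, (u0 s k) ^ 2 with hGinf
  set Hinf : ℝ := ∫ s in Set.Ioi (0:ℝ), ∑ k, (u s k) ^ 2 with hHinf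
  have hvne : v i ≠ 0 := by
    intro h
    have := horth i i
    rw [h] at this
    simp at this
  have hvPv : v i ⬝ᵥ P *ᵥ v i = lam i := by
    rw [heig i, dotProduct_smul, smul_eq_mul, horth i i, if_pos rfl, mul_one]
  set cR := v i ⬝ᵥ R *ᵥ v i with hcR
  set E : ℝ := Real.exp Ginf * Hinf with hE
  have hHinfnn : 0 ≤ Hinf := by
    rw [hHinf]
    apply MeasureTheory.integral_nonneg
    intro s
    exact Finset.sum_nonneg fun k _ => sq_nonneg _
  have hEnn : 0 ≤ E := mul_nonneg (Real.exp_nonneg _) hHinfnn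
  have key : ∀ ε : ℝ, 0 < ε → q^2 ≤ (lam i + ε * cR) * E ∧ 0 < lam i + ε * cR := by
    intro ε hε
    set P' := P + ε • R with hP'def
    set C : Matrix (Fin n) (Fin n) ℝ := B * Bᵀ + ε • 1 with hCdef
    have hCsym : Cᵀ = C := by
      rw [hCdef, Matrix.transpose_add, Matrix.transpose_smul, Matrix.transpose_one,
        Matrix.transpose_mul, Matrix.transpose_transpose]
    have hCpd : PDm C := by
      intro w hw
      rw [hCdef, Matrix.add_mulVec, dotProduct_add, Matrix.smul_mulVec,
        dotProduct_smul, Matrix.one_mulVec, smul_eq_mul]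
      have h1 : w ⬝ᵥ (B * Bᵀ) *ᵥ w = (Bᵀ *ᵥ w) ⬝ᵥ (Bᵀ *ᵥ w) := by
        rw [← Matrix.mulVec_mulVec, dotT]
      rw [h1]
      have h2 : 0 < ε * (w ⬝ᵥ w) := mul_pos hε (dot_self_pos hw)
      have h3 := dot_self_nonneg' (Bᵀ *ᵥ w)
      linarith
    have hLyapP' : Lop A N P' = -C := by
      rw [hP'def, Lop_add_smul]
      have : Lop A N P = -(B * Bᵀ) := hP
      rw [this, hReq, hCdef]
      rw [smul_neg]
      rw [neg_add]
    have hP'eq : P' = Xsol A N C 1 := by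
      apply unique_sol A N 1 hdet1
      have h2 : (2 - 2*(1:ℝ)) = 0 := by norm_num
      have h3 := Xsol_eq A N C 1 hdet1
      rw [h2, zero_smul, one_smul, zero_sub] at h3
      rw [h2, zero_smul, zero_smul, one_smul, one_smul, zero_sub, zero_sub, hLyapP',
        neg_neg, h3]
    have hP'pd : PDm P' := by
      rw [hP'eq]
      exact Xsol_one_pd A N hstab' C hCsym hCpd 1 ⟨zero_le_one, le_refl 1⟩
    have hP'sym : P'ᵀ = P' := by
      rw [hP'eq]
      exact Xsol_symm A N C hCsym 1 hdet1
    have hLyap' : A * P' + P' * Aᵀ + (∑ k, N k * P' * (N k)ᵀ)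
        = -(B * Bᵀ + ε • (1 : Matrix (Fin n) (Fin n) ℝ)) := hLyapP'
    have hEnergy := energy_estimate A N B u hu huL2 u0 hu0 x hx0 hx ε hε P'
      hP'sym hP'pd hLyap' t ht (v i)
    have hd : v i ⬝ᵥ P' *ᵥ v i = lam i + ε * cR := by
      rw [hP'def, Matrix.add_mulVec, dotProduct_add, hvPv,
        Matrix.smul_mulVec, dotProduct_smul, smul_eq_mul, hcR]
    constructor
    · rw [hd] at hEnergy
      exact hEnergy
    · have := hP'pd (v i) hvne
      rw [hd] at this
      exact this
  have hlamnn : 0 ≤ lam i := by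
    by_contra hneg
    push_neg at hneg
    set ε₀ := (-(lam i))/(2*(|cR|+1)) with hε₀
    have hcR1 : (0:ℝ) < |cR| + 1 := by positivity
    have hε₀pos : 0 < ε₀ := by
      apply div_pos (by linarith) (by linarith)
    obtain ⟨-, hpos⟩ := key ε₀ hε₀pos
    have h1 : ε₀ * cR ≤ ε₀ * (|cR|+1) :=
      mul_le_mul_of_nonneg_left (by linarith [le_abs_self cR]) hε₀pos.le
    have h2 : ε₀ * (|cR|+1) = -(lam i)/2 := by
      rw [hε₀]
      field_simp
    nlinarith
  have hq2 : q^2 ≤ lam i * E := by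
    apply le_of_forall_pos_le_add
    intro δ hδ
    have hden : (0:ℝ) < |cR * E| + 1 := by positivity
    set ε := δ / (|cR * E| + 1) with hεdef
    have hεpos : 0 < ε := div_pos hδ hden
    obtain ⟨hle, -⟩ := key ε hεpos
    have h1 : (lam i + ε * cR) * E = lam i * E + ε * (cR * E) := by ring
    have h2 : ε * (cR * E) ≤ ε * |cR * E| :=
      mul_le_mul_of_nonneg_left (le_abs_self _) hεpos.le
    have h3 : ε * |cR * E| ≤ ε * (|cR * E| + 1) :=
      mul_le_mul_of_nonneg_left (by linarith) hεpos.le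
    have h4 : ε * (|cR * E| + 1) = δ := by
      rw [hεdef]
      field_simp
    linarith
  have habs : |q| = Real.sqrt (q^2) := (Real.sqrt_sq_eq_abs q).symm
  rw [habs]
  calc Real.sqrt (q^2) ≤ Real.sqrt (lam i * E) := Real.sqrt_le_sqrt hq2
    _ = Real.sqrt (lam i) * Real.sqrt E := Real.sqrt_mul hlamnn _
    _ = Real.sqrt (lam i) * (Real.sqrt (Real.exp Ginf) * Real.sqrt Hinf) := by
        rw [hE, Real.sqrt_mul (Real.exp_nonneg _)]
    _ = Real.sqrt (lam i) * Real.exp (0.5 * Ginf) * Real.sqrt Hinf := by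
        rw [show (0.5:ℝ) * Ginf = Ginf / 2 by ring, Real.exp_half]
        ring

/-- **Corollary: reachability estimate.** With `P` the reachability
Gramian and `(v_k, λ_k)` an orthonormal eigenbasis of `P`,
`sup_{t≥0} |⟨x(t), v_k⟩| ≤ λ_k^{1/2} exp(0.5 ‖u⁰‖²_{L²}) ‖u‖_{L²}` for each `k`. -/
theorem reachability_estimate
    {n m : ℕ}
    (A : Matrix (Fin n) (Fin n) ℝ) (N : Fin m → Matrix (Fin n) (Fin n) ℝ)
    (B : Matrix (Fin n) (Fin m) ℝ)
    (u : ℝ → Fin m → ℝ) (hu : Continuous u)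
    (huL2 : IntegrableOn (fun s => ∑ k, (u s k) ^ 2) (Set.Ioi (0:ℝ)))
    (u0 : ℝ → Fin m → ℝ) (hu0 : ∀ t k, u0 t k = if N k = 0 then 0 else u t k)
    -- x solves the bilinear state equation with x(0) = 0
    (x : ℝ → Fin n → ℝ) (hx0 : x 0 = 0)
    (hx : ∀ t : ℝ, 0 ≤ t → ∀ i, HasDerivAt (fun τ => x τ i)
      ((A.mulVec (x t) + B.mulVec (u t) + ∑ k, u t k • (N k).mulVec (x t)) i) t)
    -- stability assumption
    (hstab : ∀ z ∈ spectrum ℂ ((A ⊗ₖ (1 : Matrix (Fin n) (Fin n) ℝ)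
        + (1 : Matrix (Fin n) (Fin n) ℝ) ⊗ₖ A + ∑ k, N k ⊗ₖ N k).map Complex.ofReal),
        z.re < 0)
    -- P solves the generalized Lyapunov equation
    (P : Matrix (Fin n) (Fin n) ℝ)
    (hP : A * P + P * Aᵀ + (∑ k, N k * P * (N k)ᵀ) = -(B * Bᵀ))
    -- orthonormal basis of eigenvectors of P with eigenvalues λ
    (v : Fin n → Fin n → ℝ) (lam : Fin n → ℝ)
    (horth : ∀ i j, v i ⬝ᵥ v j = if i = j then (1:ℝ) else 0)
    (heig : ∀ i, P.mulVec (v i) = lam i • v i) :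
    ∀ i : Fin n, ∀ t : ℝ, 0 ≤ t →
      |x t ⬝ᵥ v i|
        ≤ Real.sqrt (lam i)
          * Real.exp (0.5 * ∫ s in Set.Ioi (0:ℝ), ∑ k, (u0 s k) ^ 2)
          * Real.sqrt (∫ s in Set.Ioi (0:ℝ), ∑ k, (u s k) ^ 2) := by
  exact reachability_estimate' A N B u hu huL2 u0 hu0 x hx0 hx hstab P hP v lam horth heig
end
end
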